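/- arXiv:2309.12473 — 6 statements merged into one kernel-verified Lean document; each statement's English description precedes it below -/
import Mathlib

section
/- Every two longest paths in a finite connected graph share at least one vertex. -/
open SimpleGraph

namespace SimpleGraph.Walk

variable {V : Type*} {G : SimpleGraph V}

lemma IsPath.append' {a b c : V} {p : G.Walk a b} {q : G.Walk b c}
    (hp : p.IsPath) (hq : q.IsPath)
    (h : ∀ z ∈ p.support, z ∈ q.support → z = b) : (p.append q).IsPath := by
  rw [isPath_def, support_append]
  have hnd := hq.support_nodup
  rw [q.support_eq_cons] at hnd
  refine List.Nodup.append hp.support_nodup hnd.of_cons ?_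
  intro z hz hz'
  have hb : z = b := h z hz (q.support_eq_cons ▸ List.mem_cons_of_mem _ hz')
  subst hb
  exact List.Nodup.notMem hnd hz'

lemma exists_prefix_first {Q : V → Prop} :
    ∀ {c d : V} (r : G.Walk c d), Q d →
      ∃ (b : V) (_ : Q b) (s : G.Walk c b), s.support ⊆ r.support ∧
        ∀ z ∈ s.support, Q z → z = b := by
  intro c d r
  induction r with
  | nil => exact fun hd => ⟨_, hd, Walk.nil, by simp, by simp⟩
  | @cons a a' d h r ih =>
    intro hd
    by_cases hc : Q a
    · refine ⟨a, hc, Walk.nil, by simp, by simp⟩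
    · obtain ⟨b, hb, s, hsub, hfirst⟩ := ih hd
      refine ⟨b, hb, Walk.cons h s, ?_, ?_⟩
      · intro z hz
        rw [support_cons] at hz ⊢
        rcases List.mem_cons.mp hz with rfl | hz
        · exact List.mem_cons_self
        · exact List.mem_cons_of_mem _ (hsub hz)
      · intro z hz hQ
        rw [support_cons] at hz
        rcases List.mem_cons.mp hz with rfl | hz
        · exact absurd hQ hc
        · exact hfirst z hz hQ

end SimpleGraph.Walk

/-- Every two longest paths in a finite connected graph share at least one vertex. -/
theorem stmt_0 {V : Type*} [Fintype V] (G : SimpleGraph V) (hG : G.Connected)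
    {u v x y : V} (p : G.Walk u v) (q : G.Walk x y) (hp : p.IsPath) (hq : q.IsPath)
    (hpmax : ∀ {a b : V} (r : G.Walk a b), r.IsPath → r.length ≤ p.length)
    (hqmax : ∀ {a b : V} (r : G.Walk a b), r.IsPath → r.length ≤ q.length) :
    ∃ z, z ∈ p.support ∧ z ∈ q.support := by
  have : DecidableEq V := Classical.decEq V
  by_contra hcon
  push_neg at hcon
  have hL : p.length = q.length := le_antisymm (hqmax p hp) (hpmax q hq)
  obtain ⟨r⟩ := hG.preconnected u x
  -- find b : first vertex of r in q.support
  obtain ⟨b, hb, s1, hsub1, hfirst1⟩ :=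
    Walk.exists_prefix_first (Q := (· ∈ q.support)) r q.start_mem_support
  -- find a : first vertex of s1.reverse in p.support
  obtain ⟨a, ha, s2, hsub2, hfirst2⟩ :=
    Walk.exists_prefix_first (Q := (· ∈ p.support)) s1.reverse p.start_mem_support
  set s : G.Walk a b := s2.reverse.bypass with hs
  have hspath : s.IsPath := Walk.bypass_isPath _
  have hssub : s.support ⊆ s2.support := by
    intro z hz
    have := Walk.support_bypass_subset _ hz
    rwa [Walk.support_reverse, List.mem_reverse] at this
  have hfirstP : ∀ z ∈ s.support, z ∈ p.support → z = a :=
    fun z hz => hfirst2 z (hssub hz)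
  have hfirstQ : ∀ z ∈ s.support, z ∈ q.support → z = b := by
    intro z hz hzq
    have h1 : z ∈ s1.support := by
      have := hsub2 (hssub hz)
      rwa [Walk.support_reverse, List.mem_reverse] at this
    exact hfirst1 z h1 hzq
  have hab : a ≠ b := fun h => hcon a ha (h ▸ hb)
  have hslen : 1 ≤ s.length := by
    rcases Nat.eq_zero_or_pos s.length with h | h
    · exact absurd (Walk.eq_of_length_eq_zero h) hab
    · exact h
  -- long half of p ending at a
  obtain ⟨w, A, hApath, hAsub, hA2⟩ :
      ∃ (w : V) (A : G.Walk w a), A.IsPath ∧ A.support ⊆ p.support ∧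
        p.length ≤ 2 * A.length := by
    have hsplit : (p.takeUntil a ha).length + (p.dropUntil a ha).length = p.length := by
      rw [← Walk.length_append, Walk.take_spec]
    rcases le_total (p.takeUntil a ha).length (p.dropUntil a ha).length with h | h
    · exact ⟨v, (p.dropUntil a ha).reverse, (hp.dropUntil ha).reverse,
        by simpa [Walk.support_reverse] using p.support_dropUntil_subset ha,
        by rw [Walk.length_reverse]; omega⟩
    · exact ⟨u, p.takeUntil a ha, hp.takeUntil ha,
        p.support_takeUntil_subset ha, by omega⟩
  -- long half of q starting at b
  obtain ⟨z, B, hBpath, hBsub, hB2⟩ :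
      ∃ (z : V) (B : G.Walk b z), B.IsPath ∧ B.support ⊆ q.support ∧
        q.length ≤ 2 * B.length := by
    have hsplit : (q.takeUntil b hb).length + (q.dropUntil b hb).length = q.length := by
      rw [← Walk.length_append, Walk.take_spec]
    rcases le_total (q.takeUntil b hb).length (q.dropUntil b hb).length with h | h
    · exact ⟨y, q.dropUntil b hb, hq.dropUntil hb,
        q.support_dropUntil_subset hb, by omega⟩
    · exact ⟨x, (q.takeUntil b hb).reverse, (hq.takeUntil hb).reverse,
        by simpa [Walk.support_reverse] using q.support_takeUntil_subset hb,
        by rw [Walk.length_reverse]; omega⟩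
  have hinner : (s.append B).IsPath := by
    refine hspath.append' hBpath ?_
    intro z hz hz'
    exact hfirstQ z hz (hBsub hz')
  have hW : (A.append (s.append B)).IsPath := by
    refine hApath.append' hinner ?_
    intro c hc hc'
    rw [Walk.mem_support_append_iff] at hc'
    rcases hc' with hc' | hc'
    · exact (hfirstP c hc' (hAsub hc)).symm ▸ rfl
    · exact absurd (hBsub hc') (hcon c (hAsub hc))
  have hlen := hpmax _ hW
  rw [Walk.length_append, Walk.length_append] at hlen
  omega
end

section
/- For every n ≥ 3, every finite 2-connected graph containing a path of length n² also contains a cycle of length at least n. -/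
open SimpleGraph

/-- `G` contains a path with `n` edges. -/
def HasPathLen {V : Type*} (G : SimpleGraph V) (n : ℕ) : Prop :=
  ∃ (u v : V) (p : G.Walk u v), p.IsPath ∧ p.length = n

section AuxLemmas

open SimpleGraph Walk

variable {V : Type*} {G : SimpleGraph V}


lemma aux_length_pos_of_ne {a b : V} (p : G.Walk a b) (h : a ≠ b) : 1 ≤ p.length := by
  cases p with
  | nil => exact absurd rfl h
  | cons h q => simp [Nat.succ_le_succ]

lemma aux_closed_path_nil {a : V} {p : G.Walk a a} (hp : p.IsPath) : p.length = 0 := by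
  rw [Walk.isPath_iff_eq_nil] at hp; subst hp; rfl

lemma aux_edge_of_isPath {a b : V} {p : G.Walk a b} (hp : p.IsPath) (he : s(a, b) ∈ p.edges) :
    p.length = 1 := by
  cases p with
  | nil => simp at he
  | @cons _ c _ h q =>
    rw [Walk.edges_cons, List.mem_cons] at he
    rcases he with he | he
    · rw [Sym2.eq_iff] at he
      rcases he with ⟨-, hbc⟩ | ⟨hac, -⟩
      · subst hbc
        have := (Walk.cons_isPath_iff h q).mp hp
        rw [Walk.isPath_iff_eq_nil] at this
        · rw [this.1]; rfl
      · exact absurd hac h.ne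
    · have := q.fst_mem_support_of_mem_edges he
      have h2 := (Walk.cons_isPath_iff h q).mp hp
      exact absurd this h2.2

lemma aux_exists_first_hit {a b : V} (p : G.Walk a b) (S : Set V) (hb : b ∈ S) :
    ∃ (x : V) (p₁ : G.Walk a x) (p₂ : G.Walk x b),
      p = p₁.append p₂ ∧ x ∈ S ∧ ∀ y ∈ p₁.support, y ∈ S → y = x := by
  induction p with
  | nil =>
    refine ⟨_, .nil, .nil, rfl, hb, ?_⟩
    intro y hy _
    simpa using hy
  | @cons u v w h q ih =>
    by_cases hu : u ∈ S
    · exact ⟨u, .nil, .cons h q, rfl, hu, by simp⟩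
    · obtain ⟨x, q₁, q₂, hq, hx, hfirst⟩ := ih hb
      refine ⟨x, .cons h q₁, q₂, by rw [Walk.cons_append, hq], hx, ?_⟩
      intro y hy hyS
      rw [Walk.support_cons, List.mem_cons] at hy
      rcases hy with rfl | hy
      · exact absurd hyS hu
      · exact hfirst y hy hyS

lemma aux_tail_no_start {a b : V} {p : G.Walk a b} (hp : p.IsPath) : a ∉ p.support.tail := by
  have := hp.support_nodup
  rw [p.support_eq_cons] at this
  exact (List.nodup_cons.mp this).1

lemma aux_isCycle_append_reverse {u x : V} {A B : G.Walk u x} (hux : u ≠ x)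
    (hA : A.IsPath) (hB : B.IsPath)
    (hdisj : ∀ y, y ∈ A.support → y ∈ B.support → y = u ∨ y = x)
    (hlen : 3 ≤ A.length + B.length) : (A.append B.reverse).IsCycle := by
  have key : ∀ y, y ∈ A.support.tail → y ∈ B.reverse.support.tail → False := by
    intro y hyA hyB
    have hyA' : y ∈ A.support := by rw [A.support_eq_cons]; exact List.mem_cons_of_mem _ hyA
    have hyu : y ≠ u := by rintro rfl; exact aux_tail_no_start hA hyA
    have hyB' : y ∈ B.support := by
      have h1 : y ∈ B.reverse.support := by
        rw [B.reverse.support_eq_cons]; exact List.mem_cons_of_mem _ hyB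
      rwa [Walk.support_reverse, List.mem_reverse] at h1
    have hyx : y ≠ x := by rintro rfl; exact aux_tail_no_start hB.reverse hyB
    rcases hdisj y hyA' hyB' with rfl | rfl
    · exact hyu rfl
    · exact hyx rfl
  rw [Walk.isCycle_def]
  refine ⟨⟨?_⟩, ?_, ?_⟩
  · rw [Walk.edges_append, Walk.edges_reverse]
    refine List.Nodup.append hA.edges_nodup (List.nodup_reverse.mpr hB.edges_nodup) ?_
    intro e heA heB'
    have heB : e ∈ B.edges := by rwa [List.mem_reverse] at heB'
    induction e with
    | _ y z =>
      have hadj : G.Adj y z := A.adj_of_mem_edges heA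
      have hyA := A.fst_mem_support_of_mem_edges heA
      have hzA := A.snd_mem_support_of_mem_edges heA
      have hyB := B.fst_mem_support_of_mem_edges heB
      have hzB := B.snd_mem_support_of_mem_edges heB
      have heux : s(y, z) = s(u, x) := by
        rcases hdisj y hyA hyB with rfl | rfl <;> rcases hdisj z hzA hzB with rfl | rfl
        · exact absurd rfl hadj.ne
        · rfl
        · rw [Sym2.eq_swap]
        · exact absurd rfl hadj.ne
      rw [heux] at heA heB
      have h1 := aux_edge_of_isPath hA heA
      have h2 := aux_edge_of_isPath hB heB
      omega
  · intro hnil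
    have : (A.append B.reverse).length = 0 := by rw [hnil]; rfl
    rw [Walk.length_append, Walk.length_reverse] at this
    omega
  · rw [Walk.tail_support_append]
    refine List.Nodup.append (hA.support_nodup.tail) (hB.reverse.support_nodup.tail) ?_
    intro y hyA hyB
    exact key y hyA hyB

lemma aux_path_le {n : ℕ} (hn : 3 ≤ n)
    (hcyc : ∀ (w : V) (c : G.Walk w w), c.IsCycle → c.length + 1 ≤ n) (d : ℕ) :
    ∀ (u v : V), G.dist u v = d → ∀ (P : G.Walk u v), P.IsPath → P.length ≤ (n - 2) * d := by
  classical
  induction d using Nat.strong_induction_on with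
  | _ d ih =>
  intro u v hd P hP
  by_cases huv : u = v
  · subst huv
    rw [aux_closed_path_nil hP]
    exact Nat.zero_le _
  · have hreach : G.Reachable u v := P.reachable
    have hdpos : 1 ≤ d := hd ▸ hreach.pos_dist_of_ne huv
    obtain ⟨Q, hQp, hQl⟩ := hreach.exists_path_of_dist
    rw [hd] at hQl
    cases P with
    | nil => exact absurd rfl huv
    | @cons _ w _ hadj P' =>
      have hunotP' : u ∉ P'.support := ((Walk.cons_isPath_iff hadj P').mp hP).2
      obtain ⟨x, P₁, P₂, hsplit, hxS, hfirst⟩ :=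
        aux_exists_first_hit P' {y | y ∈ Q.support} (Q.end_mem_support)
      have hxQ : x ∈ Q.support := hxS
      have hxP' : x ∈ P'.support := by
        rw [hsplit]
        exact Walk.subset_support_append_left _ _ P₁.end_mem_support
      have hux : u ≠ x := fun h => hunotP' (h ▸ hxP')
      set Q₁ := Q.takeUntil x hxQ with hQ₁def
      set Q₂ := Q.dropUntil x hxQ with hQ₂def
      have hQspec : Q₁.append Q₂ = Q := Q.take_spec hxQ
      have hQlen : Q₁.length + Q₂.length = d := by
        rw [← Walk.length_append, hQspec, hQl]
      set a := Q₁.length with hadef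
      have ha1 : 1 ≤ a := aux_length_pos_of_ne Q₁ hux
      -- dist x v = Q₂.length
      set d2 := G.dist x v with hd2def
      have hd2le : d2 ≤ Q₂.length := dist_le Q₂
      have hdled : d ≤ a + d2 := by
        obtain ⟨W, hW⟩ := Q₂.reachable.exists_walk_length_eq_dist
        calc d = G.dist u v := hd.symm
          _ ≤ (Q₁.append W).length := dist_le _
          _ = a + d2 := by rw [Walk.length_append, hW]
      have hd2 : a + d2 = d := by omega
      -- the path (cons hadj P₁)
      have hPsplit : (Walk.cons hadj P₁).append P₂ = Walk.cons hadj P' := by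
        rw [hsplit, Walk.cons_append]
      have hcP₁ : (Walk.cons hadj P₁).IsPath := by
        apply Walk.IsPath.of_append_left (q := P₂)
        rw [hPsplit]; exact hP
      have hP₂ : P₂.IsPath := by
        apply Walk.IsPath.of_append_right (p := Walk.cons hadj P₁)
        rw [hPsplit]; exact hP
      -- key bound : P₁.length + a + 2 ≤ n
      have hkey : P₁.length + a + 2 ≤ n := by
        by_cases h3 : 3 ≤ (Walk.cons hadj P₁).length + Q₁.length
        · have hdisj : ∀ y, y ∈ (Walk.cons hadj P₁).support → y ∈ Q₁.support →
              y = u ∨ y = x := by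
            intro y hy hyQ₁
            rw [Walk.support_cons, List.mem_cons] at hy
            rcases hy with rfl | hy
            · exact Or.inl rfl
            · right
              exact hfirst y hy (Q.support_takeUntil_subset hxQ hyQ₁)
          have hcyc' := hcyc u _ (aux_isCycle_append_reverse hux hcP₁ (hQp.takeUntil hxQ)
            hdisj h3)
          rw [Walk.length_append, Walk.length_reverse, Walk.length_cons] at hcyc'
          rw [← hQ₁def] at hcyc'
          omega
        · rw [Walk.length_cons] at h3
          omega
      -- induction
      have hd2lt : d2 < d := by omega
      have hIH := ih d2 hd2lt x v rfl P₂ hP₂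
      obtain ⟨m, rfl⟩ : ∃ m, n = m + 2 := ⟨n - 2, by omega⟩
      have hma : 1 + P₁.length ≤ m * a := by
        nlinarith [Nat.mul_le_mul_right a (show P₁.length + a ≤ m by omega)]
      have hlenP : (Walk.cons hadj P').length = 1 + P₁.length + P₂.length := by
        rw [hsplit, Walk.length_cons, Walk.length_append]
        omega
      have hm2 : m + 2 - 2 = m := by omega
      rw [hm2] at hIH
      rw [hlenP, hm2]
      have hmul : m * d = m * a + m * d2 := by rw [← hd2, Nat.mul_add]
      omega

lemma aux_exists_third [Fintype V] (hcard : 3 ≤ Fintype.card V) (a b : V) :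
    ∃ c : V, c ≠ a ∧ c ≠ b := by
  classical
  by_contra hc
  push_neg at hc
  have hsub : (Finset.univ : Finset V) ⊆ {a, b} := by
    intro x _
    by_cases hxa : x = a
    · simp [hxa]
    · simp [hc x hxa]
  have h1 := Finset.card_le_card hsub
  have h2 : ({a, b} : Finset V).card ≤ 2 :=
    (Finset.card_insert_le a {b}).trans (by simp)
  rw [Finset.card_univ] at h1
  omega

lemma aux_avoid_path (h2conn : ∀ v : V, (G.induce ({v}ᶜ : Set V)).Connected)
    (w a b : V) (ha : a ≠ w) (hb : b ≠ w) :
    ∃ p : G.Walk a b, p.IsPath ∧ w ∉ p.support := by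
  classical
  have haw : a ∈ ({w}ᶜ : Set V) := by simp [ha]
  have hbw : b ∈ ({w}ᶜ : Set V) := by simp [hb]
  obtain ⟨q⟩ := (h2conn w) ⟨a, haw⟩ ⟨b, hbw⟩
  let f := (Embedding.induce ({w}ᶜ : Set V) (G := G)).toHom
  let p0 : G.Walk a b := q.map f
  have hw0 : w ∉ p0.support := by
    show w ∉ (q.map f).support
    rw [Walk.support_map]
    intro hmem
    obtain ⟨y, hy, hyw⟩ := List.mem_map.mp hmem
    have hyne : (y : V) ≠ w := y.2
    exact hyne hyw
  exact ⟨p0.bypass, Walk.bypass_isPath p0, fun hw => hw0 (p0.support_bypass_subset hw)⟩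

lemma aux_connected [Fintype V] (hcard : 3 ≤ Fintype.card V)
    (h2conn : ∀ v : V, (G.induce ({v}ᶜ : Set V)).Connected) : G.Connected := by
  have hne : Nonempty V := Fintype.card_pos_iff.mp (by omega)
  refine ⟨fun a b => ?_⟩
  obtain ⟨c, hca, hcb⟩ := aux_exists_third hcard a b
  obtain ⟨p, -, -⟩ := aux_avoid_path h2conn c a b (Ne.symm hca) (Ne.symm hcb)
  exact p.reachable

lemma aux_neighbor [Fintype V] (hcard : 3 ≤ Fintype.card V)
    (h2conn : ∀ v : V, (G.induce ({v}ᶜ : Set V)).Connected)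
    (u v : V) (huv : u ≠ v) : ∃ w, G.Adj v w ∧ w ≠ u := by
  obtain ⟨z, hzv, hzu⟩ := aux_exists_third hcard v u
  obtain ⟨p, hp, hup⟩ := aux_avoid_path h2conn u v z (Ne.symm huv) hzu
  cases p with
  | nil => exact absurd rfl hzv
  | @cons _ w _ h q =>
    refine ⟨w, h, fun e => hup ?_⟩
    rw [Walk.support_cons]
    exact List.mem_cons_of_mem _ (e ▸ q.start_mem_support)

def AuxTwoPaths (G : SimpleGraph V) (u v : V) : Prop :=
  ∃ (A B : G.Walk u v), A.IsPath ∧ B.IsPath ∧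
    (∀ y, y ∈ A.support → y ∈ B.support → y = u ∨ y = v) ∧ 3 ≤ A.length + B.length

lemma aux_split [DecidableEq V] {u w v : V} {A : G.Walk u w} (hA : A.IsPath)
    (hv : v ∈ A.support) :
    ∀ y, y ∈ (A.takeUntil v hv).support → y ∈ (A.dropUntil v hv).support → y = v := by
  have hnodup := hA.support_nodup
  rw [← A.take_spec hv, Walk.support_append] at hnodup
  intro y h1 h2
  rw [(A.dropUntil v hv).support_eq_cons, List.mem_cons] at h2
  rcases h2 with rfl | h2
  · rfl
  · exact absurd h2 (List.disjoint_of_nodup_append hnodup h1)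

lemma aux_end_not_mem_take [DecidableEq V] {u w v : V} {A : G.Walk u w} (hA : A.IsPath)
    (hv : v ∈ A.support) (hvw : v ≠ w) : w ∉ (A.takeUntil v hv).support := by
  intro hmem
  exact hvw (aux_split hA hv w hmem (Walk.end_mem_support _)).symm

lemma aux_start_not_mem_drop [DecidableEq V] {u w v : V} {A : G.Walk u w} (hA : A.IsPath)
    (hv : v ∈ A.support) (huv : u ≠ v) : u ∉ (A.dropUntil v hv).support := by
  intro hmem
  exact huv (aux_split hA hv u (Walk.start_mem_support _) hmem)

lemma aux_mem_reverse_tail {a b y : V} {p : G.Walk a b} (hp : p.IsPath)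
    (hy : y ∈ p.reverse.support.tail) : y ∈ p.support ∧ y ≠ b := by
  constructor
  · have h1 : y ∈ p.reverse.support := by
      rw [p.reverse.support_eq_cons]; exact List.mem_cons_of_mem _ hy
    rwa [Walk.support_reverse, List.mem_reverse] at h1
  · rintro rfl; exact aux_tail_no_start hp.reverse hy

lemma aux_isPath_concat {a b c : V} {p : G.Walk a b} (hp : p.IsPath) (h : G.Adj b c)
    (hc : c ∉ p.support) : (p.concat h).IsPath := by
  rw [Walk.concat_eq_append, Walk.isPath_def, Walk.support_append]
  refine List.Nodup.append hp.support_nodup (by simp) ?_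
  intro y hy hy2
  simp only [Walk.support_cons, Walk.support_nil, List.tail_cons, List.mem_singleton] at hy2
  subst hy2
  exact hc hy

lemma aux_extend [DecidableEq V] {u w v : V} {A B : G.Walk u w}
    (hA : A.IsPath) (hB : B.IsPath)
    (hdisj : ∀ y, y ∈ A.support → y ∈ B.support → y = u ∨ y = w)
    (hsum : 3 ≤ A.length + B.length)
    (hv : v ∈ A.support) (hvu : v ≠ u) (hvw : v ≠ w) :
    AuxTwoPaths G u v := by
  set A₁ := A.takeUntil v hv with hA₁def
  set A₂ := A.dropUntil v hv with hA₂def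
  have hA₁ : A₁.IsPath := hA.takeUntil hv
  have hA₂ : A₂.IsPath := hA.dropUntil hv
  have hsplitdisj := aux_split hA hv
  have hwA₁ : w ∉ A₁.support := aux_end_not_mem_take hA hv hvw
  have huA₂ : u ∉ A₂.support := aux_start_not_mem_drop hA hv (Ne.symm hvu)
  have hBA₂ : (B.append A₂.reverse).IsPath := by
    rw [Walk.isPath_def, Walk.support_append]
    refine List.Nodup.append hB.support_nodup (hA₂.reverse.support_nodup.tail) ?_
    intro y hyB hyA₂t
    obtain ⟨hyA₂, hynw⟩ := aux_mem_reverse_tail hA₂ hyA₂t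
    have hyA : y ∈ A.support := A.support_dropUntil_subset hv hyA₂
    rcases hdisj y hyA hyB with rfl | rfl
    · exact huA₂ hyA₂
    · exact hynw rfl
  refine ⟨A₁, B.append A₂.reverse, hA₁, hBA₂, ?_, ?_⟩
  · intro y hyA₁ hyB2
    rw [Walk.mem_support_append_iff] at hyB2
    rcases hyB2 with hyB | hyA₂r
    · rcases hdisj y (A.support_takeUntil_subset hv hyA₁) hyB with rfl | rfl
      · exact Or.inl rfl
      · exact absurd hyA₁ hwA₁
    · right
      rw [Walk.support_reverse, List.mem_reverse] at hyA₂r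
      exact hsplitdisj y hyA₁ hyA₂r
  · have hlensplit : A₁.length + A₂.length = A.length := by
      rw [← Walk.length_append, A.take_spec hv]
    rw [Walk.length_append, Walk.length_reverse]
    omega

lemma aux_case3 [DecidableEq V] {u w v x : V} {A B : G.Walk u w}
    (hA : A.IsPath) (hB : B.IsPath)
    (hdisj : ∀ y, y ∈ A.support → y ∈ B.support → y = u ∨ y = w)
    (huw : u ≠ w) (hadj : G.Adj w v)
    (hvA : v ∉ A.support) (hvB : v ∉ B.support)
    {R₁ : G.Walk v x} (hR₁ : R₁.IsPath) (hwR₁ : w ∉ R₁.support)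
    (hfirst : ∀ y, y ∈ R₁.support → (y ∈ A.support ∨ y ∈ B.support) → y = x)
    (hxA : x ∈ A.support) :
    AuxTwoPaths G u v := by
  have hxw : x ≠ w := fun e => hwR₁ (e ▸ R₁.end_mem_support)
  have hxv : x ≠ v := fun e => hvA (e ▸ hxA)
  set A₁ := A.takeUntil x hxA with hA₁def
  have hA₁ : A₁.IsPath := hA.takeUntil hxA
  have hwA₁ : w ∉ A₁.support := aux_end_not_mem_take hA hxA hxw
  have hP₁ : (A₁.append R₁.reverse).IsPath := by
    rw [Walk.isPath_def, Walk.support_append]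
    refine List.Nodup.append hA₁.support_nodup (hR₁.reverse.support_nodup.tail) ?_
    intro y hyA₁ hyR
    obtain ⟨hyR₁, hynx⟩ := aux_mem_reverse_tail hR₁ hyR
    exact hynx (hfirst y hyR₁ (Or.inl (A.support_takeUntil_subset hxA hyA₁)))
  have hP₂ : (B.concat hadj).IsPath := aux_isPath_concat hB hadj hvB
  refine ⟨A₁.append R₁.reverse, B.concat hadj, hP₁, hP₂, ?_, ?_⟩
  · intro y hy1 hy2
    rw [Walk.mem_support_append_iff] at hy1
    rw [Walk.concat_eq_append, Walk.mem_support_append_iff] at hy2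
    have hy2' : y ∈ B.support ∨ y = v := by
      rcases hy2 with hy2 | hy2
      · exact Or.inl hy2
      · have hy2'' : y = w ∨ y = v := by simpa using hy2
        rcases hy2'' with rfl | rfl
        · exact Or.inl B.end_mem_support
        · exact Or.inr rfl
    rcases hy1 with hyA₁ | hyRr
    · rcases hy2' with hyB | rfl
      · rcases hdisj y (A.support_takeUntil_subset hxA hyA₁) hyB with rfl | rfl
        · exact Or.inl rfl
        · exact absurd hyA₁ hwA₁
      · exact absurd (A.support_takeUntil_subset hxA hyA₁) hvA
    · have hyR₁ : y ∈ R₁.support := by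
        have h1 : y ∈ R₁.reverse.support := hyRr
        rwa [Walk.support_reverse, List.mem_reverse] at h1
      rcases hy2' with hyB | rfl
      · have hyx := hfirst y hyR₁ (Or.inr hyB)
        subst hyx
        rcases hdisj y hxA hyB with rfl | rfl
        · exact Or.inl rfl
        · exact absurd rfl hxw
      · exact Or.inr rfl
  · have hR₁pos : 1 ≤ R₁.length := aux_length_pos_of_ne R₁ (Ne.symm hxv)
    have hBpos : 1 ≤ B.length := aux_length_pos_of_ne B huw
    rw [Walk.length_append, Walk.length_reverse, Walk.length_concat]
    omega

lemma aux_twoPaths [Fintype V] (hcard : 3 ≤ Fintype.card V)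
    (h2conn : ∀ v : V, (G.induce ({v}ᶜ : Set V)).Connected) :
    ∀ (d : ℕ) (u v : V), G.dist u v = d → u ≠ v → AuxTwoPaths G u v := by
  classical
  have hconn := aux_connected hcard h2conn
  intro d
  induction d using Nat.strong_induction_on with
  | _ d ih =>
  intro u v hd huv
  have hd1 : 1 ≤ d := hd ▸ hconn.pos_dist_of_ne huv
  by_cases hadj : G.Adj u v
  · obtain ⟨w, hwv, hwu⟩ := aux_neighbor hcard h2conn u v huv
    have hwvne : w ≠ v := hwv.ne'
    obtain ⟨R, hR, hvR⟩ := aux_avoid_path h2conn v u w huv hwvne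
    have hRpos : 1 ≤ R.length := aux_length_pos_of_ne R (Ne.symm hwu)
    refine ⟨Walk.cons hadj Walk.nil, R.concat hwv.symm, ?_,
      aux_isPath_concat hR hwv.symm hvR, ?_, ?_⟩
    · rw [Walk.cons_isPath_iff]
      constructor
      · simp
      · simp [hadj.ne]
    · intro y hy _
      simp only [Walk.support_cons, Walk.support_nil, List.mem_cons,
        List.mem_singleton] at hy
      tauto
    · rw [Walk.length_concat]
      simp only [Walk.length_cons, Walk.length_nil]
      omega
  · -- d ≥ 2
    have hd2 : 2 ≤ d := by
      by_contra h
      push_neg at h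
      have hd1' : d = 1 := by omega
      rw [hd1'] at hd
      exact hadj (dist_eq_one_iff_adj.mp hd)
    obtain ⟨Q, hQp, hQl⟩ := hconn.exists_path_of_dist u v
    rw [hd] at hQl
    rcases hQrev : Q.reverse with _ | ⟨hvw, R⟩
    · exact absurd rfl huv
    · rename_i w
      -- hvw : G.Adj v w, R : G.Walk w u
      have hRlen : R.length = d - 1 := by
        have := congrArg Walk.length hQrev
        rw [Walk.length_reverse, hQl, Walk.length_cons] at this
        omega
      have hdw : G.dist u w = d - 1 := by
        have hle : G.dist u w ≤ d - 1 := by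
          have := dist_le R.reverse
          rwa [Walk.length_reverse, hRlen] at this
        have hge : d ≤ G.dist u w + 1 := by
          obtain ⟨W, hW⟩ := R.reverse.reachable.exists_walk_length_eq_dist
          calc d = G.dist u v := hd.symm
            _ ≤ (W.concat hvw.symm).length := dist_le _
            _ = G.dist u w + 1 := by rw [Walk.length_concat, hW]
        omega
      have huw : u ≠ w := by
        intro h
        rw [← h, SimpleGraph.dist_self] at hdw
        omega
      obtain ⟨A, B, hA, hB, hdisj, hsum⟩ := ih (d - 1) (by omega) u w hdw huw
      have hvw' : v ≠ w := hvw.ne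
      by_cases hvA : v ∈ A.support
      · exact aux_extend hA hB hdisj hsum hvA (Ne.symm huv) hvw'
      · by_cases hvB : v ∈ B.support
        · exact aux_extend hB hA (fun y h1 h2 => hdisj y h2 h1) (by omega) hvB
            (Ne.symm huv) hvw'
        · obtain ⟨Rav, hRav, hwRav⟩ := aux_avoid_path h2conn w v u hvw' huw
          obtain ⟨x, R₁, R₂, hsplit, hxS, hfirst⟩ := aux_exists_first_hit Rav
            {y | y ∈ A.support ∨ y ∈ B.support} (Or.inl A.start_mem_support)
          have hR₁ : R₁.IsPath := by
            apply Walk.IsPath.of_append_left (q := R₂)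
            rw [← hsplit]; exact hRav
          have hwR₁ : w ∉ R₁.support := by
            intro hmem
            exact hwRav (by rw [hsplit]; exact Walk.subset_support_append_left _ _ hmem)
          rcases hxS with hxA | hxB
          · exact aux_case3 hA hB hdisj huw hvw.symm hvA hvB hR₁ hwR₁
              (fun y hy hmem => hfirst y hy hmem) hxA
          · exact aux_case3 hB hA (fun y h1 h2 => hdisj y h2 h1) huw hvw.symm hvB hvA
              hR₁ hwR₁ (fun y hy hmem => hfirst y hy (Or.symm hmem)) hxB


end AuxLemmas

/-- For every `n ≥ 3`, every finite 2-connected graph containing a path of length `n²`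
also contains a cycle of length at least `n`. -/
theorem stmt_1 {V : Type*} [Fintype V] (G : SimpleGraph V) (n : ℕ) (hn : 3 ≤ n)
    (hcard : 3 ≤ Fintype.card V)
    (h2conn : ∀ v : V, (G.induce ({v}ᶜ : Set V)).Connected)
    (hpath : HasPathLen G (n ^ 2)) :
    ∃ (u : V) (c : G.Walk u u), c.IsCycle ∧ n ≤ c.length := by
  classical
  by_contra hcon
  push_neg at hcon
  have hcyc : ∀ (w : V) (c : G.Walk w w), c.IsCycle → c.length + 1 ≤ n :=
    fun w c hc => hcon w c hc
  obtain ⟨u, v, P, hP, hPlen⟩ := hpath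
  have hn2pos : 0 < n ^ 2 := by positivity
  have huv : u ≠ v := by
    rintro rfl
    have h0 := aux_closed_path_nil hP
    rw [hPlen] at h0
    omega
  obtain ⟨A, B, hA, hB, hdisj, hsum⟩ :=
    aux_twoPaths hcard h2conn (G.dist u v) u v rfl huv
  have hC := aux_isCycle_append_reverse huv hA hB hdisj hsum
  have hClen := hcyc u _ hC
  rw [Walk.length_append, Walk.length_reverse] at hClen
  have hdA : G.dist u v ≤ A.length := dist_le A
  have hdB : G.dist u v ≤ B.length := dist_le B
  have hpathle := aux_path_le (G := G) hn hcyc (G.dist u v) u v rfl P hP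
  rw [hPlen] at hpathle
  set dd := G.dist u v with hdd
  have hdist2 : 2 * dd + 1 ≤ n := by omega
  obtain ⟨m, rfl⟩ : ∃ m, n = m + 3 := ⟨n - 3, by omega⟩
  have hsub : m + 3 - 2 = m + 1 := by omega
  rw [hsub] at hpathle
  nlinarith [Nat.mul_le_mul_left (m + 1) (show 2 * dd ≤ m + 2 by omega)]
end

section
/- Let G, H be graphs and k ∈ ℕ with H k-connected and H a minor of G. Let (T, 𝒱) be a tree-decomposition of G of adhesion less than k such that every adhesion set induces a complete subgraph of G. Then there exists a node t ∈ V(T) such that H is a minor of the induced subgraph G[V_t]. -/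
open SimpleGraph

/-- `B` is a model of `H` inside `G`. -/
def IsModelOf {V W : Type*} (G : SimpleGraph V) (H : SimpleGraph W) (B : W → Set V) : Prop :=
  (∀ w, (B w).Nonempty) ∧ (∀ w, (G.induce (B w)).Connected) ∧
  (Pairwise fun w w' => Disjoint (B w) (B w')) ∧
  (∀ ⦃w w'⦄, H.Adj w w' → ∃ u ∈ B w, ∃ v ∈ B w', G.Adj u v)

/-- `H` is a minor of `G`. -/
def IsMinorOf {V W : Type*} (H : SimpleGraph W) (G : SimpleGraph V) : Prop :=
  ∃ B : W → Set V, IsModelOf G H B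

/-- `(Tr, 𝒱)` is a tree-decomposition of `G`. -/
structure IsTreeDecomp {V T : Type*} (G : SimpleGraph V) (Tr : SimpleGraph T)
    (𝒱 : T → Set V) : Prop where
  tree : Tr.IsTree
  coverV : ∀ v, ∃ t, v ∈ 𝒱 t
  coverE : ∀ ⦃u v⦄, G.Adj u v → ∃ t, u ∈ 𝒱 t ∧ v ∈ 𝒱 t
  sep : ∀ ⦃x z : T⦄ (p : Tr.Walk x z), p.IsPath → ∀ y ∈ p.support, 𝒱 x ∩ 𝒱 z ⊆ 𝒱 y

/-- `G` is `k`-connected. -/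
def KConnected {V : Type*} (G : SimpleGraph V) (k : ℕ) : Prop :=
  (k < Nat.card V ∨ Infinite V) ∧
  ∀ s : Set V, s.Finite → s.ncard < k → (G.induce sᶜ).Connected


namespace StmtAux

variable {V T : Type} {Tr : SimpleGraph T}

/-- Nodes on the `u`-side of the tree edge `tu`. -/
def cmpS (Tr : SimpleGraph T) (t u : T) : Set T :=
  {s | (Tr.deleteEdges {s(t, u)}).Reachable u s}

lemma mem_cmpS_self (t u : T) : u ∈ cmpS Tr t u := Reachable.refl u

lemma bridge (hT : Tr.IsTree) {t u : T} (h : Tr.Adj t u) :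
    ¬ (Tr.deleteEdges {s(t, u)}).Reachable t u := by
  have hb := (isAcyclic_iff_forall_adj_isBridge.mp hT.IsAcyclic) h
  exact isBridge_iff.mp hb

lemma not_mem_cmpS (hT : Tr.IsTree) {t u : T} (h : Tr.Adj t u) : t ∉ cmpS Tr t u :=
  fun hr => bridge hT h hr.symm

/-- Generic propagation along walks. -/
lemma walk_propagate {X : Type} {Γ : SimpleGraph X} {P Q : X → Prop}
    (hstep : ∀ a b, Γ.Adj a b → Q a → Q b → P a → P b) :
    ∀ {x y : X} (p : Γ.Walk x y), (∀ z ∈ p.support, Q z) → P x → P y := by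
  intro x y p
  induction p with
  | nil => exact fun _ h => h
  | cons hadj q ih =>
    intro hQ hP
    refine ih (fun z hz => hQ z (by simp [hz])) ?_
    exact hstep _ _ hadj (hQ _ (by simp)) (hQ _ (by simp)) hP

lemma cmpS_cover (hc : Tr.Connected) {t u : T} (_h : Tr.Adj t u) (s : T) :
    s ∈ cmpS Tr t u ∨ s ∈ cmpS Tr u t := by
  obtain ⟨p⟩ := hc.preconnected u s
  refine walk_propagate (P := fun z => z ∈ cmpS Tr t u ∨ z ∈ cmpS Tr u t)
    (Q := fun _ => True) ?_ p (fun _ _ => trivial) (Or.inl (mem_cmpS_self t u))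
  intro a b hab _ _ hPa
  by_cases he : s(a, b) = s(t, u)
  · rw [Sym2.eq_iff] at he
    rcases he with ⟨ha, hb⟩ | ⟨ha, hb⟩
    · rw [hb]; exact Or.inl (mem_cmpS_self t u)
    · rw [hb]; exact Or.inr (mem_cmpS_self u t)
  · have hadj' : (Tr.deleteEdges {s(t, u)}).Adj a b := by
      rw [deleteEdges_adj]
      exact ⟨hab, by simpa using he⟩
    have hadj'' : (Tr.deleteEdges {s(u, t)}).Adj a b := by
      rw [deleteEdges_adj]
      refine ⟨hab, by simpa [Sym2.eq_swap] using he⟩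
    rcases hPa with hPa | hPa
    · exact Or.inl (hPa.trans hadj'.reachable)
    · exact Or.inr (hPa.trans hadj''.reachable)

variable {G : SimpleGraph V} {𝒱 : T → Set V}

/-- Vertices of `G` in bags on the `u`-side of the edge `tu`. -/
def sideV (Tr : SimpleGraph T) (𝒱 : T → Set V) (t u : T) : Set V :=
  {v | ∃ s ∈ cmpS Tr t u, v ∈ 𝒱 s}

lemma cross (htd : IsTreeDecomp G Tr 𝒱) {t u : T} (h : Tr.Adj t u) {a b : T} {v : V}
    (ha : a ∈ cmpS Tr u t) (hb : b ∈ cmpS Tr t u) (hva : v ∈ 𝒱 a) (hvb : v ∈ 𝒱 b) :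
    v ∈ 𝒱 t ∩ 𝒱 u := by
  classical
  obtain ⟨p0⟩ := htd.tree.isConnected.preconnected a b
  set p := p0.toPath with hp
  by_cases he : s(t, u) ∈ (p : Tr.Walk a b).edges
  · have ht : t ∈ (p : Tr.Walk a b).support := Walk.fst_mem_support_of_mem_edges _ he
    have hu : u ∈ (p : Tr.Walk a b).support := Walk.snd_mem_support_of_mem_edges _ he
    exact ⟨htd.sep _ p.2 t ht ⟨hva, hvb⟩, htd.sep _ p.2 u hu ⟨hva, hvb⟩⟩
  · exfalso
    have hq : ∀ e ∈ (p : Tr.Walk a b).edges, e ∈ (Tr.deleteEdges {s(t, u)}).edgeSet := by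
      intro e hee
      induction e with
      | h x y =>
        rw [mem_edgeSet, deleteEdges_adj]
        refine ⟨(p : Tr.Walk a b).adj_of_mem_edges hee, ?_⟩
        intro hxy
        apply he
        simp only [Set.mem_singleton_iff] at hxy
        rwa [← hxy]
    have hab : (Tr.deleteEdges {s(t, u)}).Reachable a b :=
      ⟨(p : Tr.Walk a b).transfer _ hq⟩
    -- from t we can reach a, from b we can reach u, contradiction with bridge
    have h1 : (Tr.deleteEdges {s(t, u)}).Reachable t a := by
      have := ha
      simpa [cmpS, Sym2.eq_swap] using this
    have h2 : (Tr.deleteEdges {s(t, u)}).Reachable u b := hb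
    exact bridge htd.tree h ((h1.trans hab).trans h2.symm)

lemma sideV_inter (htd : IsTreeDecomp G Tr 𝒱) {t u : T} (h : Tr.Adj t u) {v : V}
    (h1 : v ∈ sideV Tr 𝒱 t u) (h2 : v ∈ sideV Tr 𝒱 u t) : v ∈ 𝒱 t ∩ 𝒱 u := by
  obtain ⟨b, hb, hvb⟩ := h1
  obtain ⟨a, ha, hva⟩ := h2
  exact cross htd h ha hb hva hvb

lemma mem_sideV_of_mem_bag {t u : T} {v : V} {s : T} (hs : s ∈ cmpS Tr t u) (hv : v ∈ 𝒱 s) :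
    v ∈ sideV Tr 𝒱 t u := ⟨s, hs, hv⟩

lemma bag_right_subset_sideV {t u : T} : 𝒱 u ⊆ sideV Tr 𝒱 t u :=
  fun _ hv => ⟨u, mem_cmpS_self t u, hv⟩

lemma bag_left_subset_sideV {t u : T} : 𝒱 t ⊆ sideV Tr 𝒱 u t :=
  fun _ hv => ⟨t, mem_cmpS_self u t, hv⟩

lemma sideV_cover (htd : IsTreeDecomp G Tr 𝒱) {t u : T} (h : Tr.Adj t u) (v : V) :
    v ∈ sideV Tr 𝒱 t u ∨ v ∈ sideV Tr 𝒱 u t := by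
  obtain ⟨s, hs⟩ := htd.coverV v
  rcases cmpS_cover htd.tree.isConnected h s with hc | hc
  · exact Or.inl ⟨s, hc, hs⟩
  · exact Or.inr ⟨s, hc, hs⟩

/-- An edge of `G` whose end `x` lies on the `u`-side but not in the adhesion set
stays on the `u`-side. -/
lemma side_step (htd : IsTreeDecomp G Tr 𝒱) {t u : T} (h : Tr.Adj t u) {x y : V}
    (hx : x ∈ sideV Tr 𝒱 t u) (hxS : x ∉ 𝒱 t ∩ 𝒱 u) (hadj : G.Adj x y) :
    y ∈ sideV Tr 𝒱 t u := by
  obtain ⟨s, hs1, hs2⟩ := htd.coverE hadj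
  rcases cmpS_cover htd.tree.isConnected h s with hc | hc
  · exact ⟨s, hc, hs2⟩
  · exfalso
    obtain ⟨a, hau, hva⟩ := hx
    exact hxS (cross htd h hc hau hs1 hva)

/-- A vertex outside the bag `𝒱 t` lies on the far side of some edge at `t`. -/
lemma exists_side_of_not_mem_bag (htd : IsTreeDecomp G Tr 𝒱) {t : T} {v : V}
    (hv : v ∉ 𝒱 t) : ∃ u, Tr.Adj t u ∧ v ∈ sideV Tr 𝒱 t u := by
  classical
  obtain ⟨s, hs⟩ := htd.coverV v
  have hst : s ≠ t := fun h => hv (h ▸ hs)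
  obtain ⟨p0⟩ := htd.tree.isConnected.preconnected t s
  set p := p0.toPath with hpdef
  have hp : (p : Tr.Walk t s).IsPath := p.2
  cases hq : (p : Tr.Walk t s) with
  | nil => exact absurd rfl hst.symm
  | cons hadj q =>
    rename_i u
    refine ⟨u, hadj, ⟨s, ?_, hs⟩⟩
    have hp' : (Walk.cons hadj q).IsPath := hq ▸ hp
    rw [Walk.cons_isPath_iff] at hp'
    have hne : s(t, u) ∉ q.edges := by
      intro hmem
      exact hp'.2 (Walk.fst_mem_support_of_mem_edges _ hmem)
    have hq' : ∀ e ∈ q.edges, e ∈ (Tr.deleteEdges {s(t, u)}).edgeSet := by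
      intro e hee
      induction e with
      | h x y =>
        rw [mem_edgeSet, deleteEdges_adj]
        refine ⟨q.adj_of_mem_edges hee, ?_⟩
        intro hxy
        simp only [Set.mem_singleton_iff] at hxy
        exact hne (hxy ▸ hee)
    exact ⟨q.transfer _ hq'⟩

section Walks

variable {X : Type} {Γ : SimpleGraph X}

/-- The inclusion homomorphism from an induced subgraph. -/
def inclHom (Γ : SimpleGraph X) (s : Set X) : Γ.induce s →g Γ where
  toFun := Subtype.val
  map_rel' := by intro a b hab; exact hab

lemma walk_down {s : Set X} {x y : ↥s} (p : (Γ.induce s).Walk x y) :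
    ∃ q : Γ.Walk x.1 y.1, q.support = p.support.map Subtype.val :=
  ⟨p.map (inclHom Γ s), Walk.support_map _ _⟩

lemma walk_up {s : Set X} {x y : X} (q : Γ.Walk x y) (hq : ∀ z ∈ q.support, z ∈ s) :
    ∀ (hx : x ∈ s) (hy : y ∈ s),
      ∃ p : (Γ.induce s).Walk ⟨x, hx⟩ ⟨y, hy⟩, ∀ z ∈ p.support, z.1 ∈ q.support := by
  induction q with
  | nil =>
    intro hx hy
    exact ⟨Walk.nil, by simp⟩
  | cons hadj q ih =>
    rename_i a b c
    intro hx hy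
    have hb : b ∈ s := hq b (by simp)
    obtain ⟨p, hp⟩ := ih (fun z hz => hq z (by simp [hz])) hb hy
    have hadj' : (Γ.induce s).Adj ⟨a, hx⟩ ⟨b, hb⟩ := by
      simp only [comap_adj, Function.Embedding.coe_subtype]
      exact hadj
    refine ⟨Walk.cons hadj' p, ?_⟩
    intro z hz
    rw [Walk.support_cons] at hz
    rcases List.mem_cons.mp hz with rfl | hz
    · simp
    · simp [hp z hz]

lemma connected_of_walks {s : Set X} (hne : s.Nonempty)
    (h : ∀ x ∈ s, ∀ y ∈ s, ∃ q : Γ.Walk x y, ∀ z ∈ q.support, z ∈ s) :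
    (Γ.induce s).Connected := by
  rw [connected_iff]
  refine ⟨?_, ⟨⟨hne.choose, hne.choose_spec⟩⟩⟩
  rintro ⟨x, hx⟩ ⟨y, hy⟩
  obtain ⟨q, hq⟩ := h x hx y hy
  obtain ⟨p, _⟩ := walk_up q hq hx hy
  exact ⟨p⟩

lemma walks_of_connected {s : Set X} (h : (Γ.induce s).Connected) {x y : X}
    (hx : x ∈ s) (hy : y ∈ s) : ∃ q : Γ.Walk x y, ∀ z ∈ q.support, z ∈ s := by
  obtain ⟨p⟩ := h.preconnected ⟨x, hx⟩ ⟨y, hy⟩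
  obtain ⟨q, hq⟩ := walk_down p
  refine ⟨q, ?_⟩
  intro z hz
  rw [hq] at hz
  obtain ⟨z', _, rfl⟩ := List.mem_map.mp hz
  exact z'.2

lemma exists_crossing_edge {s1 s2 : Set X} (hd : Disjoint s1 s2) :
    ∀ {x y : X} (p : Γ.Walk x y), (∀ z ∈ p.support, z ∈ s1 ∪ s2) → x ∈ s1 → y ∈ s2 →
      ∃ a ∈ s1, ∃ b ∈ s2, Γ.Adj a b := by
  intro x y p
  induction p with
  | nil =>
    intro _ hx hy
    exact absurd hy (Set.disjoint_left.mp hd hx)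
  | cons hadj q ih =>
    rename_i a b c
    intro hsup hx hy
    rcases hsup b (by simp) with hb | hb
    · exact ih (fun z hz => hsup z (by simp [hz])) hb hy
    · exact ⟨a, hx, b, hb, hadj⟩

end Walks

section Model

variable {W : Type} {H : SimpleGraph W} {B : W → Set V} {k : ℕ}

/-- Branch sets meeting the adhesion set of the edge `tu`. -/
def Xset (B : W → Set V) (𝒱 : T → Set V) (t u : T) : Set W :=
  {w | (B w ∩ (𝒱 t ∩ 𝒱 u)).Nonempty}

lemma Xset_comm (B : W → Set V) (𝒱 : T → Set V) (t u : T) :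
    Xset B 𝒱 t u = Xset B 𝒱 u t := by
  unfold Xset
  rw [Set.inter_comm (𝒱 t)]

/-- The edge `tu` "points towards `u`": every branch set avoiding the adhesion set lies
on the `u`-side. -/
def orient (Tr : SimpleGraph T) (𝒱 : T → Set V) (B : W → Set V) (t u : T) : Prop :=
  ∀ w ∉ Xset B 𝒱 t u, B w ⊆ sideV Tr 𝒱 t u

lemma notmem_adhesion_of_notmem_Xset {t u : T} {w : W} (hw : w ∉ Xset B 𝒱 t u) :
    ∀ v ∈ B w, v ∉ 𝒱 t ∩ 𝒱 u :=
  fun v hv hvS => hw ⟨v, hv, hvS⟩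

lemma Xset_finite_ncard (hB : IsModelOf G H B) {t u : T}
    (hS : (𝒱 t ∩ 𝒱 u).Finite) (hSk : (𝒱 t ∩ 𝒱 u).ncard < k) :
    (Xset B 𝒱 t u).Finite ∧ (Xset B 𝒱 t u).ncard < k := by
  classical
  by_cases hX : (Xset B 𝒱 t u).Nonempty
  · obtain ⟨w1, hw1⟩ := hX
    obtain ⟨v1, _⟩ := hw1
    let φ : W → V := fun w => if h : (B w ∩ (𝒱 t ∩ 𝒱 u)).Nonempty then h.choose else v1
    have hφ : ∀ w ∈ Xset B 𝒱 t u, φ w ∈ B w ∩ (𝒱 t ∩ 𝒱 u) := by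
      intro w hw
      have : φ w = (hw : (B w ∩ (𝒱 t ∩ 𝒱 u)).Nonempty).choose := dif_pos hw
      rw [this]
      exact hw.choose_spec
    have hinj : Set.InjOn φ (Xset B 𝒱 t u) := by
      intro w hw w' hw' heq
      by_contra hne
      have hd := hB.2.2.1 hne
      exact Set.disjoint_left.mp hd (hφ w hw).1 (heq ▸ (hφ w' hw').1)
    have himg : φ '' (Xset B 𝒱 t u) ⊆ 𝒱 t ∩ 𝒱 u := by
      rintro _ ⟨w, hw, rfl⟩
      exact (hφ w hw).2
    have hXf : (Xset B 𝒱 t u).Finite :=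
      Set.Finite.of_finite_image (hS.subset himg) hinj
    refine ⟨hXf, ?_⟩
    calc (Xset B 𝒱 t u).ncard = (φ '' (Xset B 𝒱 t u)).ncard :=
          (Set.ncard_image_of_injOn hinj).symm
      _ ≤ (𝒱 t ∩ 𝒱 u).ncard := Set.ncard_le_ncard himg hS
      _ < k := hSk
  · rw [Set.not_nonempty_iff_eq_empty] at hX
    rw [hX]
    simp only [Set.finite_empty, Set.ncard_empty, true_and]
    exact lt_of_le_of_lt (Nat.zero_le _) hSk

lemma branch_in_side (htd : IsTreeDecomp G Tr 𝒱) (hB : IsModelOf G H B)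
    {t u : T} (h : Tr.Adj t u) {w : W} (hw : w ∉ Xset B 𝒱 t u) :
    B w ⊆ sideV Tr 𝒱 t u ∨ B w ⊆ sideV Tr 𝒱 u t := by
  obtain ⟨x0, hx0⟩ := hB.1 w
  have hprop : ∀ (d1 d2 : T), Tr.Adj d1 d2 → (∀ v ∈ B w, v ∉ 𝒱 d1 ∩ 𝒱 d2) →
      x0 ∈ sideV Tr 𝒱 d1 d2 → B w ⊆ sideV Tr 𝒱 d1 d2 := by
    intro d1 d2 hd hno hx0side y hy
    obtain ⟨q, hq⟩ := walks_of_connected (hB.2.1 w) hx0 hy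
    refine walk_propagate (P := fun z => z ∈ sideV Tr 𝒱 d1 d2) (Q := fun z => z ∈ B w)
      ?_ q hq hx0side
    intro a b hab ha _ hPa
    exact side_step htd hd hPa (hno a ha) hab
  rcases sideV_cover htd h x0 with hs | hs
  · exact Or.inl (hprop t u h (notmem_adhesion_of_notmem_Xset hw) hs)
  · refine Or.inr (hprop u t h.symm ?_ hs)
    intro v hv
    rw [Set.inter_comm]
    exact notmem_adhesion_of_notmem_Xset hw v hv

lemma orient_of_witness (htd : IsTreeDecomp G Tr 𝒱) (hB : IsModelOf G H B)
    {t u : T} (h : Tr.Adj t u)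
    (hc : (H.induce (Xset B 𝒱 t u)ᶜ).Connected)
    {w0 : W} (hw0 : w0 ∉ Xset B 𝒱 t u) (h0 : B w0 ⊆ sideV Tr 𝒱 t u) :
    orient Tr 𝒱 B t u := by
  intro w hw
  obtain ⟨q, hq⟩ := walks_of_connected hc (by simpa using hw0) (by simpa using hw)
  refine walk_propagate (P := fun z => B z ⊆ sideV Tr 𝒱 t u)
    (Q := fun z => z ∉ Xset B 𝒱 t u) ?_ q (fun z hz => by simpa using hq z hz) h0
  intro w1 w2 h12 hw1 hw2 hP1
  obtain ⟨xa, hxa, xb, hxb, hG⟩ := hB.2.2.2 h12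
  have hxb' : xb ∈ sideV Tr 𝒱 t u :=
    side_step htd h (hP1 hxa) (notmem_adhesion_of_notmem_Xset hw1 xa hxa) hG
  rcases branch_in_side htd hB h hw2 with h2 | h2
  · exact h2
  · exfalso
    exact notmem_adhesion_of_notmem_Xset hw2 xb hxb
      (sideV_inter htd h hxb' (h2 hxb))

lemma compl_Xset_nonempty (hH : KConnected H k) {t u : T}
    (hXf : (Xset B 𝒱 t u).Finite) (hXk : (Xset B 𝒱 t u).ncard < k) :
    ((Xset B 𝒱 t u)ᶜ : Set W).Nonempty := by
  by_contra hne
  rw [Set.not_nonempty_iff_eq_empty, Set.compl_empty_iff] at hne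
  rcases hH.1 with hk | hinf
  · rw [← Set.ncard_univ, ← hne] at hk
    exact absurd hXk (not_lt_of_gt hk)
  · rw [hne, Set.finite_univ_iff] at hXf
    exact @not_finite W ‹Infinite W› hXf

lemma orient_total (htd : IsTreeDecomp G Tr 𝒱) (hB : IsModelOf G H B)
    (hH : KConnected H k) {t u : T} (h : Tr.Adj t u)
    (hS : (𝒱 t ∩ 𝒱 u).Finite) (hSk : (𝒱 t ∩ 𝒱 u).ncard < k) :
    orient Tr 𝒱 B t u ∨ orient Tr 𝒱 B u t := by
  obtain ⟨hXf, hXk⟩ := Xset_finite_ncard (G := G) hB hS hSk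
  have hc : (H.induce (Xset B 𝒱 t u)ᶜ).Connected := hH.2 _ hXf hXk
  obtain ⟨w0, hw0⟩ := compl_Xset_nonempty (V := V) (T := T) hH hXf hXk
  have hw0' : w0 ∉ Xset B 𝒱 t u := hw0
  rcases branch_in_side htd hB h hw0' with h0 | h0
  · exact Or.inl (orient_of_witness htd hB h hc hw0' h0)
  · refine Or.inr (orient_of_witness htd hB h.symm ?_ ?_ h0)
    · rwa [← Xset_comm]
    · rwa [← Xset_comm]

lemma exists_sink (htd : IsTreeDecomp G Tr 𝒱) (hB : IsModelOf G H B) (hH : KConnected H k)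
    (hadh : ∀ ⦃t u : T⦄, Tr.Adj t u → (𝒱 t ∩ 𝒱 u).Finite ∧ (𝒱 t ∩ 𝒱 u).ncard < k) :
    ∃ t : T, ∀ u : T, Tr.Adj t u → orient Tr 𝒱 B u t := by
  classical
  by_contra hns
  push_neg at hns
  choose g hg1 hg2 using hns
  -- k injectively chosen branch vertices, their representatives and bags
  have hws : ∃ ws : Fin k → W, Function.Injective ws := by
    rcases hH.1 with hk | hinf
    · have hpos : 0 < Nat.card W := lt_of_le_of_lt (Nat.zero_le k) hk
      obtain ⟨hne, hfin⟩ := Nat.card_pos_iff.mp hpos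
      haveI := hfin
      haveI := Fintype.ofFinite W
      rw [Nat.card_eq_fintype_card] at hk
      obtain ⟨f⟩ := Function.Embedding.nonempty_of_card_le (α := Fin k) (β := W)
        (by rw [Fintype.card_fin]; omega)
      exact ⟨f, f.injective⟩
    · haveI := hinf
      exact ⟨fun j => (Infinite.natEmbedding W) j,
        (Infinite.natEmbedding W).injective.comp Fin.val_injective⟩
  obtain ⟨ws, hwsinj⟩ := hws
  choose vv hvv using fun j => hB.1 (ws j)
  choose sb hsb using fun j => htd.coverV (vv j)
  obtain ⟨t0⟩ := htd.tree.isConnected.nonempty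
  set a : ℕ → T := fun n => g^[n] t0 with ha_def
  have ha_succ : ∀ n, a (n + 1) = g (a n) := fun n => Function.iterate_succ_apply' g n t0
  have haadj : ∀ n, Tr.Adj (a n) (a (n + 1)) := by
    intro n
    rw [ha_succ n]
    exact hg1 (a n)
  have hnot : ∀ n, ¬ orient Tr 𝒱 B (a (n + 1)) (a n) := by
    intro n
    rw [ha_succ n]
    exact hg2 (a n)
  have hfwd : ∀ n, orient Tr 𝒱 B (a n) (a (n + 1)) := fun n =>
    (orient_total htd hB hH (haadj n) (hadh (haadj n)).1 (hadh (haadj n)).2).resolve_right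
      (hnot n)
  have hR1 : ∀ i n, i < n → a n ∈ cmpS Tr (a i) (a (i + 1)) := by
    intro i n hin
    induction n, hin using Nat.le_induction with
    | base => exact mem_cmpS_self _ _
    | succ n hin ih =>
      by_cases he : s(a n, a (n + 1)) = s(a i, a (i + 1))
      · exfalso
        rw [Sym2.eq_iff] at he
        rcases he with ⟨h1, h2⟩ | ⟨h1, h2⟩
        · have := ih
          rw [h1] at this
          exact not_mem_cmpS htd.tree (haadj i) this
        · have := hfwd n
          rw [h1, h2] at this
          exact hnot i this
      · refine ih.trans (Adj.reachable ?_)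
        rw [deleteEdges_adj]
        exact ⟨haadj n, by simpa using he⟩
  have hR2 : ∀ i n, i < n → a n ≠ a i := by
    intro i n hin heq
    have h1 := hR1 i n hin
    rw [heq] at h1
    exact not_mem_cmpS htd.tree (haadj i) h1
  have hR3 : ∀ n j, j ≤ n → (Tr.deleteEdges {s(a n, a (n + 1))}).Reachable (a 0) (a j) := by
    intro n j hj
    induction j with
    | zero => exact Reachable.refl _
    | succ j ihj =>
      have hj' : j ≤ n := Nat.le_of_succ_le hj
      refine (ihj hj').trans (Adj.reachable ?_)
      rw [deleteEdges_adj]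
      refine ⟨haadj j, ?_⟩
      simp only [Set.mem_singleton_iff, Sym2.eq_iff]
      rintro (⟨h1, _⟩ | ⟨h1, _⟩)
      · exact hR2 j n (Nat.lt_of_succ_le hj) h1.symm
      · exact hR2 j (n + 1) (Nat.lt_succ_of_le hj') h1.symm
  have hR4 : ∀ x : T, {n : ℕ | x ∈ cmpS Tr (a n) (a (n + 1))}.Finite := by
    intro x
    obtain ⟨p0⟩ := htd.tree.isConnected.preconnected (a 0) x
    have hsupfin : {y : T | y ∈ p0.support}.Finite := p0.support.finite_toSet
    refine Set.Finite.of_finite_image (f := fun n => a (n + 1))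
      (Set.Finite.subset hsupfin ?_) ?_
    · rintro _ ⟨n, hn, rfl⟩
      have hn' : x ∈ cmpS Tr (a n) (a (n + 1)) := hn
      by_cases he : s(a n, a (n + 1)) ∈ p0.edges
      · exact Walk.snd_mem_support_of_mem_edges _ he
      · exfalso
        have hq : ∀ e ∈ p0.edges, e ∈ (Tr.deleteEdges {s(a n, a (n + 1))}).edgeSet := by
          intro e hee
          induction e with
          | h x1 y1 =>
            rw [mem_edgeSet, deleteEdges_adj]
            refine ⟨p0.adj_of_mem_edges hee, ?_⟩
            intro hxy
            simp only [Set.mem_singleton_iff] at hxy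
            exact he (hxy ▸ hee)
        have hreach : (Tr.deleteEdges {s(a n, a (n + 1))}).Reachable (a 0) x :=
          ⟨p0.transfer _ hq⟩
        have h1 : (Tr.deleteEdges {s(a n, a (n + 1))}).Reachable (a 0) (a n) :=
          hR3 n n le_rfl
        exact bridge htd.tree (haadj n) ((h1.symm.trans hreach).trans hn'.symm)
    · intro m hm n hn heq
      by_contra hne
      rcases lt_or_gt_of_ne hne with hlt | hlt
      · exact hR2 (m + 1) (n + 1) (Nat.succ_lt_succ hlt) heq.symm
      · exact hR2 (n + 1) (m + 1) (Nat.succ_lt_succ hlt) heq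
  have hlive : ∀ n, ∃ j : Fin k, sb j ∈ cmpS Tr (a n) (a (n + 1)) := by
    intro n
    obtain ⟨hXf, hXk⟩ := Xset_finite_ncard (G := G) hB (hadh (haadj n)).1 (hadh (haadj n)).2
    have hexj : ∃ j, ws j ∉ Xset B 𝒱 (a n) (a (n + 1)) := by
      by_contra hall
      push_neg at hall
      have hsub : Set.range ws ⊆ Xset B 𝒱 (a n) (a (n + 1)) := by
        rintro _ ⟨j, rfl⟩
        exact hall j
      have hcard : (Set.range ws).ncard = k := by
        rw [← Set.image_univ, Set.ncard_image_of_injOn hwsinj.injOn, Set.ncard_univ,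
          Nat.card_eq_fintype_card, Fintype.card_fin]
      have hle := Set.ncard_le_ncard hsub hXf
      omega
    obtain ⟨j, hj⟩ := hexj
    refine ⟨j, ?_⟩
    rcases cmpS_cover htd.tree.isConnected (haadj n) (sb j) with hc | hc
    · exact hc
    · exfalso
      have hBj : B (ws j) ⊆ sideV Tr 𝒱 (a n) (a (n + 1)) := hfwd n (ws j) hj
      have hv1 : vv j ∈ sideV Tr 𝒱 (a n) (a (n + 1)) := hBj (hvv j)
      have hv2 : vv j ∈ sideV Tr 𝒱 (a (n + 1)) (a n) := ⟨sb j, hc, hsb j⟩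
      exact notmem_adhesion_of_notmem_Xset hj (vv j) (hvv j)
        (sideV_inter htd (haadj n) hv1 hv2)
  have hcover : (Set.univ : Set ℕ) ⊆
      ⋃ j : Fin k, {n | sb j ∈ cmpS Tr (a n) (a (n + 1))} := by
    intro n _
    obtain ⟨j, hj⟩ := hlive n
    exact Set.mem_iUnion.mpr ⟨j, hj⟩
  have hfin : (Set.univ : Set ℕ).Finite :=
    Set.Finite.subset (Set.finite_iUnion fun j => hR4 (sb j)) hcover
  exact Set.infinite_univ hfin

lemma induceAdj {s : Set V} {x y : V} (hx : x ∈ s) (hy : y ∈ s) (h : G.Adj x y) :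
    (G.induce s).Adj ⟨x, hx⟩ ⟨y, hy⟩ := by
  simp only [comap_adj, Function.Embedding.coe_subtype]
  exact h

/-- Projecting a walk onto the bag of a sink node, using completeness of adhesion sets. -/
lemma project (htd : IsTreeDecomp G Tr 𝒱)
    (hcomplete : ∀ ⦃t u : T⦄, Tr.Adj t u →
      ∀ a ∈ 𝒱 t ∩ 𝒱 u, ∀ b ∈ 𝒱 t ∩ 𝒱 u, a ≠ b → G.Adj a b)
    (t : T) {A : Set V} :
    ∀ {x y : V} (p : G.Walk x y) (hy : y ∈ 𝒱 t), (∀ z ∈ p.support, z ∈ A) →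
      (∀ hx : x ∈ 𝒱 t,
        ∃ q : (G.induce (𝒱 t)).Walk ⟨x, hx⟩ ⟨y, hy⟩, ∀ z ∈ q.support, z.1 ∈ A) ∧
      (x ∉ 𝒱 t → ∀ u, Tr.Adj t u → x ∈ sideV Tr 𝒱 t u →
        ∃ x', ∃ hx' : x' ∈ 𝒱 t, x' ∈ A ∧ x' ∈ 𝒱 u ∧
          ∃ q : (G.induce (𝒱 t)).Walk ⟨x', hx'⟩ ⟨y, hy⟩, ∀ z ∈ q.support, z.1 ∈ A) := by
  intro x y p
  induction p with
  | nil =>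
    rename_i x0
    intro hy hsupp
    constructor
    · intro hx
      exact ⟨Walk.nil, by simpa using hsupp x0 (by simp)⟩
    · intro hx
      exact absurd hy hx
  | cons hadj q ih =>
    rename_i x0 b y0
    intro hy hsupp
    have hsuppq : ∀ z ∈ q.support, z ∈ A := fun z hz => hsupp z (by simp [hz])
    have hxA : x0 ∈ A := hsupp x0 (by simp)
    constructor
    · intro hx
      by_cases hb : b ∈ 𝒱 t
      · obtain ⟨q', hq'⟩ := (ih hy hsuppq).1 hb
        refine ⟨Walk.cons (induceAdj hx hb hadj) q', ?_⟩
        intro z hz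
        rw [Walk.support_cons] at hz
        rcases List.mem_cons.mp hz with rfl | hz
        · exact hxA
        · exact hq' z hz
      · obtain ⟨u, hu, hbu⟩ := exists_side_of_not_mem_bag htd hb
        obtain ⟨x', hx', hx'A, hx'u, q', hq'⟩ := (ih hy hsuppq).2 hb u hu hbu
        have hxside : x0 ∈ sideV Tr 𝒱 t u :=
          side_step htd hu hbu (fun hS => hb hS.1) hadj.symm
        have hxS : x0 ∈ 𝒱 t ∩ 𝒱 u := sideV_inter htd hu hxside (bag_left_subset_sideV hx)
        by_cases hxx : x0 = x'
        · subst hxx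
          exact ⟨q', hq'⟩
        · have hGxx : G.Adj x0 x' := hcomplete hu x0 hxS x' ⟨hx', hx'u⟩ hxx
          refine ⟨Walk.cons (induceAdj hx hx' hGxx) q', ?_⟩
          intro z hz
          rw [Walk.support_cons] at hz
          rcases List.mem_cons.mp hz with rfl | hz
          · exact hxA
          · exact hq' z hz
    · intro hx u hu hxside
      have hbside : b ∈ sideV Tr 𝒱 t u :=
        side_step htd hu hxside (fun hS => hx hS.1) hadj
      by_cases hb : b ∈ 𝒱 t
      · have hbS : b ∈ 𝒱 t ∩ 𝒱 u := sideV_inter htd hu hbside (bag_left_subset_sideV hb)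
        obtain ⟨q', hq'⟩ := (ih hy hsuppq).1 hb
        exact ⟨b, hb, hsuppq b (by simp), hbS.2, q', hq'⟩
      · exact (ih hy hsuppq).2 hb u hu hbside

end Model

end StmtAux

/-- If `H` is `k`-connected and a minor of `G`, and `G` has a tree-decomposition of
adhesion `< k` whose adhesion sets are complete in `G`, then `H` is a minor of some
part-induced subgraph `G[V_t]`. -/
theorem stmt_4 {V W T : Type} (G : SimpleGraph V) (H : SimpleGraph W) (k : ℕ)
    (hH : KConnected H k) (hminor : IsMinorOf H G)
    (Tr : SimpleGraph T) (𝒱 : T → Set V) (htd : IsTreeDecomp G Tr 𝒱)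
    (hadh : ∀ ⦃t u : T⦄, Tr.Adj t u → (𝒱 t ∩ 𝒱 u).Finite ∧ (𝒱 t ∩ 𝒱 u).ncard < k)
    (hcomplete : ∀ ⦃t u : T⦄, Tr.Adj t u →
      ∀ a ∈ 𝒱 t ∩ 𝒱 u, ∀ b ∈ 𝒱 t ∩ 𝒱 u, a ≠ b → G.Adj a b) :
    ∃ t : T, IsMinorOf H (G.induce (𝒱 t)) := by
  classical
  obtain ⟨B, hB⟩ := hminor
  obtain ⟨t, hsink⟩ := StmtAux.exists_sink htd hB hH hadh
  -- every branch set meets the bag of the sink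
  have hmeet : ∀ w : W, ∃ v, v ∈ B w ∧ v ∈ 𝒱 t := by
    intro w
    by_contra hno
    push_neg at hno
    obtain ⟨x0, hx0⟩ := hB.1 w
    obtain ⟨u, hu, hx0side⟩ := StmtAux.exists_side_of_not_mem_bag htd (hno x0 hx0)
    have hsub : B w ⊆ StmtAux.sideV Tr 𝒱 t u := by
      intro z hz
      obtain ⟨q, hq⟩ := StmtAux.walks_of_connected (hB.2.1 w) hx0 hz
      refine StmtAux.walk_propagate (P := fun z => z ∈ StmtAux.sideV Tr 𝒱 t u)
        (Q := fun z => z ∈ B w) ?_ q hq hx0side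
      intro p1 p2 h12 hp1 _ hP1
      exact StmtAux.side_step htd hu hP1 (fun hS => hno p1 hp1 hS.1) h12
    have hwX : w ∉ StmtAux.Xset B 𝒱 u t := by
      rintro ⟨v, hv1, hv2⟩
      exact hno v hv1 hv2.2
    have hsub2 : B w ⊆ StmtAux.sideV Tr 𝒱 u t := hsink u hu w hwX
    exact hno x0 hx0 (StmtAux.sideV_inter htd hu (hsub hx0) (hsub2 hx0)).1
  refine ⟨t, fun w => Subtype.val ⁻¹' B w, ?_, ?_, ?_, ?_⟩
  · -- nonempty
    intro w
    obtain ⟨v, hv1, hv2⟩ := hmeet w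
    exact ⟨⟨v, hv2⟩, hv1⟩
  · -- connectedness
    intro w
    obtain ⟨v, hv1, hv2⟩ := hmeet w
    refine StmtAux.connected_of_walks ⟨⟨v, hv2⟩, hv1⟩ ?_
    rintro ⟨x, hx⟩ hxB ⟨y, hy⟩ hyB
    obtain ⟨q0, hq0⟩ := StmtAux.walks_of_connected (hB.2.1 w) hxB hyB
    obtain ⟨q, hq⟩ := (StmtAux.project htd hcomplete t q0 hy hq0).1 hx
    exact ⟨q, fun z hz => hq z hz⟩
  · -- pairwise disjoint
    intro w w' hne
    exact (hB.2.2.1 hne).preimage _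
  · -- adjacency
    intro w w' hadj
    obtain ⟨u0, hu0, v0, hv0, hG⟩ := hB.2.2.2 hadj
    obtain ⟨x, hxB, hx𝒱⟩ := hmeet w
    obtain ⟨y, hyB, hy𝒱⟩ := hmeet w'
    obtain ⟨p1, hp1⟩ := StmtAux.walks_of_connected (hB.2.1 w) hxB hu0
    obtain ⟨p2, hp2⟩ := StmtAux.walks_of_connected (hB.2.1 w') hv0 hyB
    have hp : ∀ z ∈ (p1.append (Walk.cons hG p2)).support, z ∈ B w ∪ B w' := by
      intro z hz
      rw [Walk.mem_support_append_iff] at hz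
      rcases hz with hz | hz
      · exact Or.inl (hp1 z hz)
      · rw [Walk.support_cons] at hz
        rcases List.mem_cons.mp hz with rfl | hz
        · exact Or.inl hu0
        · exact Or.inr (hp2 z hz)
    obtain ⟨q, hq⟩ :=
      (StmtAux.project htd hcomplete t (p1.append (Walk.cons hG p2)) hy𝒱 hp).1 hx𝒱
    have hdisj : Disjoint (Subtype.val ⁻¹' B w : Set ↥(𝒱 t)) (Subtype.val ⁻¹' B w') :=
      (hB.2.2.1 hadj.ne).preimage _
    obtain ⟨a, ha, b, hbb, hab⟩ := StmtAux.exists_crossing_edge hdisj q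
      (fun z hz => hq z hz) hxB hyB
    exact ⟨a, ha, b, hbb, hab⟩
end

section
/- For every n ≥ 3, the cycle C_n is a minor of every 2-connected graph containing arbitrarily long paths. -/
open SimpleGraph

section Helpers

open SimpleGraph Walk

variable {V : Type} {G : SimpleGraph V}

/-- From connectivity of `G - z`, a walk avoiding `z`. -/
lemma walk_avoiding (h2 : ∀ v : V, (G.induce ({v}ᶜ : Set V)).Connected)
    (z u w : V) (hu : u ≠ z) (hw : w ≠ z) :
    ∃ p : G.Walk u w, z ∉ p.support := by
  obtain ⟨q⟩ := (h2 z) ⟨u, hu⟩ ⟨w, hw⟩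
  refine ⟨q.map (Embedding.induce ({z}ᶜ : Set V)).toHom, ?_⟩
  intro hmem
  replace hmem : z ∈ List.map (Embedding.induce (G := G) ({z}ᶜ : Set V)).toHom q.support := by
    rw [← Walk.support_map]; exact hmem
  obtain ⟨⟨y, hy⟩, -, hyz⟩ := List.mem_map.mp hmem
  exact hy (show y ∈ ({z} : Set V) from hyz)

/-- Split a walk at the first vertex belonging to `T`. -/
lemma exists_split_firstHit (T : Set V) {w u : V} (q : G.Walk w u) (hu : u ∈ T) :
    ∃ (x : V) (r : G.Walk w x) (s : G.Walk x u),
      q = r.append s ∧ x ∈ T ∧ (∀ y ∈ r.support, y ∈ T → y = x) := by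
  induction q with
  | nil => exact ⟨_, Walk.nil, Walk.nil, rfl, hu, by simp⟩
  | @cons a b c h q' ih =>
    by_cases ha : a ∈ T
    · exact ⟨a, Walk.nil, Walk.cons h q', rfl, ha, by simp⟩
    · obtain ⟨x, r, s, hq, hx, hr⟩ := ih hu
      refine ⟨x, Walk.cons h r, s, by rw [hq, Walk.cons_append], hx, ?_⟩
      intro y hy hyT
      rcases List.mem_cons.mp (by simpa using hy) with rfl | hy'
      · exact absurd hyT ha
      · exact hr y hy' hyT

lemma walk_avoiding' (h2 : ∀ v : V, (G.induce ({v}ᶜ : Set V)).Connected)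
    (z u w : V) (hu : u ≠ z) (hw : w ≠ z) :
    ∃ p : G.Walk u w, z ∉ p.support := by
  obtain ⟨q⟩ := (h2 z) ⟨u, hu⟩ ⟨w, hw⟩
  refine ⟨q.map (Embedding.induce ({z}ᶜ : Set V)).toHom, ?_⟩
  intro hmem
  replace hmem : z ∈ List.map (Embedding.induce (G := G) ({z}ᶜ : Set V)).toHom q.support := by
    rw [← Walk.support_map]; exact hmem
  obtain ⟨⟨y, hy⟩, -, hyz⟩ := List.mem_map.mp hmem
  exact hy (show y ∈ ({z} : Set V) from hyz)

lemma third_vertex (hcard : ∃ x y z : V, x ≠ y ∧ x ≠ z ∧ y ≠ z) (u w : V) :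
    ∃ z : V, z ≠ u ∧ z ≠ w := by
  obtain ⟨x, y, z, hxy, hxz, hyz⟩ := hcard
  by_contra hcon
  push_neg at hcon
  have hx := hcon x; have hy := hcon y; have hz := hcon z
  rcases eq_or_ne x u with h1 | h1
  · rcases eq_or_ne y u with h2 | h2
    · exact hxy (h1.trans h2.symm)
    · rcases eq_or_ne z u with h3 | h3
      · exact hxz (h1.trans h3.symm)
      · exact hyz ((hy h2).trans (hz h3).symm)
  · rcases eq_or_ne y u with h2 | h2
    · rcases eq_or_ne z u with h3 | h3
      · exact hyz (h2.trans h3.symm)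
      · exact hxz ((hx h1).trans (hz h3).symm)
    · exact hxy ((hx h1).trans (hy h2).symm)

lemma cycle_of_adj (hcard : ∃ x y z : V, x ≠ y ∧ x ≠ z ∧ y ≠ z)
    (h2 : ∀ v : V, (G.induce ({v}ᶜ : Set V)).Connected)
    {u w : V} (h : G.Adj u w) :
    ∃ (a : V) (c : G.Walk a a), c.IsCycle ∧ u ∈ c.support ∧ w ∈ c.support := by
  classical
  obtain ⟨z, hzu, hzw⟩ := third_vertex hcard u w
  obtain ⟨p1, hp1⟩ := walk_avoiding' h2 w u z h.ne hzw
  obtain ⟨p2, hp2⟩ := walk_avoiding' h2 u z w hzu (G.ne_of_adj h).symm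
  set q := p1.append p2 with hq
  have hedge : s(w, u) ∉ q.edges := by
    intro he
    rcases (List.mem_append.mp (by simpa [hq, Walk.edges_append] using he)) with h1 | h2'
    · exact hp1 (p1.fst_mem_support_of_mem_edges h1)
    · exact hp2 (p2.snd_mem_support_of_mem_edges h2')
  refine ⟨w, Walk.cons h.symm q.bypass, ?_, ?_, ?_⟩
  · exact (Walk.cons_isCycle_iff _ h.symm).mpr
      ⟨q.bypass_isPath, fun he => hedge (q.edges_bypass_subset he)⟩
  · exact List.mem_cons_of_mem _ q.bypass.start_mem_support
  · exact List.mem_cons_self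

lemma end_mem_tail_closed {b : V} (w : G.Walk b b) (hw : w.length ≠ 0) :
    b ∈ w.support.tail := by
  cases w with
  | nil => simp at hw
  | cons h p => simpa using p.end_mem_support

/-- In a cycle, between two distinct vertices there is an arc (a path inside the
cycle) containing any prescribed vertex of the cycle. -/
lemma arc_of_cycle {a : V} {c : G.Walk a a} (hc : c.IsCycle) {x z u : V}
    (hx : x ∈ c.support) (hz : z ∈ c.support) (hu : u ∈ c.support) (hxz : x ≠ z) :
    ∃ A : G.Walk x z, A.IsPath ∧ (∀ y ∈ A.support, y ∈ c.support) ∧ u ∈ A.support := by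
  classical
  set c' : G.Walk x x := c.rotate x hx with hc'
  have hcyc' : c'.IsCycle := hc.rotate hx
  have htails : c'.support.tail ~r c.support.tail := support_rotate c x hx
  have hclen : c.length ≠ 0 := by have := hc.three_le_length; omega
  have hclen' : c'.length ≠ 0 := by have := hcyc'.three_le_length; omega
  have hmem : ∀ y, y ∈ c'.support ↔ y ∈ c.support := by
    intro y
    rw [c'.support_eq_cons, c.support_eq_cons]
    simp only [List.mem_cons]
    constructor
    · rintro (rfl | h)
      · exact Or.inr (htails.perm.mem_iff.mp (end_mem_tail_closed c' hclen'))
      · exact Or.inr (htails.perm.mem_iff.mp h)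
    · rintro (rfl | h)
      · exact Or.inr (htails.perm.mem_iff.mpr (end_mem_tail_closed c hclen))
      · exact Or.inr (htails.perm.mem_iff.mpr h)
  have hz' : z ∈ c'.support := (hmem z).mpr hz
  have hu' : u ∈ c'.support := (hmem u).mpr hu
  set t := c'.takeUntil z hz' with ht
  set d := c'.dropUntil z hz' with hd
  have hspec : t.append d = c' := c'.take_spec hz'
  have hsupp : t.support ++ d.support.tail = c'.support := by
    rw [← Walk.support_append, hspec]
  have hnodup : c'.support.tail.Nodup := hcyc'.2
  have htail : t.support.tail ++ d.support.tail = c'.support.tail := by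
    have h1 := hsupp
    rw [t.support_eq_cons, c'.support_eq_cons, List.cons_append] at h1
    exact (List.cons_eq_cons.mp h1).2
  have hdisj : List.Disjoint t.support.tail d.support.tail :=
    List.disjoint_of_nodup_append (by rw [htail]; exact hnodup)
  have hdne : d.length ≠ 0 := by
    intro h0
    exact hxz (Walk.eq_of_length_eq_zero h0).symm
  have hx_in_dtail : x ∈ d.support.tail := by
    have hxd : x ∈ d.support := d.end_mem_support
    rw [d.support_eq_cons] at hxd
    rcases List.mem_cons.mp hxd with h | h
    · exact absurd h hxz
    · exact h
  have hx_not_ttail : x ∉ t.support.tail := fun hmem' => hdisj hmem' hx_in_dtail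
  have htpath : t.IsPath := by
    apply Walk.IsPath.mk'
    rw [t.support_eq_cons]
    refine List.nodup_cons.mpr ⟨hx_not_ttail, ?_⟩
    have h2 : (t.support.tail ++ d.support.tail).Nodup := by rw [htail]; exact hnodup
    exact h2.of_append_left
  have hz_in_ttail : z ∈ t.support.tail := by
    have hzt : z ∈ t.support := t.end_mem_support
    rw [t.support_eq_cons] at hzt
    rcases List.mem_cons.mp hzt with h | h
    · exact absurd h hxz.symm
    · exact h
  have hdpath : d.IsPath := by
    apply Walk.IsPath.mk'
    rw [d.support_eq_cons]
    refine List.nodup_cons.mpr ⟨fun hmem' => hdisj hz_in_ttail hmem', ?_⟩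
    have h2 : (t.support.tail ++ d.support.tail).Nodup := by rw [htail]; exact hnodup
    exact h2.of_append_right
  have humem : u ∈ t.support ++ d.support.tail := by rw [hsupp]; exact hu'
  rcases List.mem_append.mp humem with h | h
  · refine ⟨t, htpath, fun y hy => (hmem y).mp ?_, h⟩
    rw [← hsupp]
    exact List.mem_append.mpr (Or.inl hy)
  · refine ⟨d.reverse, hdpath.reverse, fun y hy => ?_, ?_⟩
    · rw [Walk.support_reverse] at hy
      have hyd : y ∈ d.support := List.mem_reverse.mp hy
      rw [d.support_eq_cons] at hyd
      rcases List.mem_cons.mp hyd with rfl | h'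
      · exact hz
      · exact (hmem y).mp (by rw [← hsupp]; exact List.mem_append.mpr (Or.inr h'))
    · rw [Walk.support_reverse]
      exact List.mem_reverse.mpr (List.mem_of_mem_tail h)
section
variable (hcard : ∃ x y z : V, x ≠ y ∧ x ≠ z ∧ y ≠ z)
  (h2 : ∀ v : V, (G.induce ({v}ᶜ : Set V)).Connected)

include hcard h2

lemma reachable_of_2conn (u w : V) : G.Reachable u w := by
  rcases eq_or_ne u w with rfl | hne
  · exact Reachable.refl u
  · obtain ⟨z, hzu, hzw⟩ := third_vertex hcard u w
    obtain ⟨p, -⟩ := walk_avoiding' h2 z u w (Ne.symm hzu) (Ne.symm hzw)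
    exact ⟨p⟩

/-- Whitney: any two distinct vertices of a 2-connected graph lie on a common cycle. -/
lemma cycle_through_pair {u w : V} (hne : u ≠ w) :
    ∃ (a : V) (c : G.Walk a a), c.IsCycle ∧ u ∈ c.support ∧ w ∈ c.support := by
  classical
  obtain ⟨p0⟩ := reachable_of_2conn hcard h2 u w
  suffices H : ∀ k (w : V), u ≠ w → ∀ p : G.Walk u w, p.length ≤ k →
      ∃ (a : V) (c : G.Walk a a), c.IsCycle ∧ u ∈ c.support ∧ w ∈ c.support by
    exact H p0.length w hne p0 le_rfl
  intro k
  induction k with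
  | zero =>
    intro w hne p hl
    exact absurd (Walk.eq_of_length_eq_zero (Nat.le_zero.mp hl)) hne
  | succ k ih =>
    intro w hne p hl
    set q := p.bypass with hqdef
    have hqpath : q.IsPath := p.bypass_isPath
    have hql : q.length ≤ k + 1 := le_trans p.length_bypass_le hl
    have hqlen1 : 1 ≤ q.length := by
      by_contra hcon
      exact hne (Walk.eq_of_length_eq_zero (p := q) (by omega))
    obtain ⟨w', hw'⟩ : ∃ w', w' = q.getVert (q.length - 1) := ⟨_, rfl⟩
    have hadj : G.Adj w' w := by
      have h1 : q.length - 1 < q.length := by omega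
      have h2' := q.adj_getVert_succ h1
      rwa [show q.length - 1 + 1 = q.length by omega, q.getVert_length, ← hw'] at h2'
    have hww' : w' ≠ w := fun h => G.irrefl (h ▸ hadj)
    -- a walk from u to w' of length ≤ k
    have hw'mem : w' ∈ q.support :=
      mem_support_iff_exists_getVert.mpr ⟨q.length - 1, hw'.symm, by omega⟩
    set t := q.takeUntil w' hw'mem with htdef
    set d' := q.dropUntil w' hw'mem with hd'def
    have hspec : t.append d' = q := q.take_spec hw'mem
    have htlen : t.length ≤ k := by
      have hdlen : 1 ≤ d'.length := by
        by_contra hcon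
        exact hww' (Walk.eq_of_length_eq_zero (p := d') (by omega))
      have hlen2 : t.length + d'.length = q.length := by
        rw [← Walk.length_append, hspec]
      omega
    rcases eq_or_ne w' u with rfl | hune
    · exact cycle_of_adj hcard h2 hadj
    obtain ⟨b, C, hC, huC, hw'C⟩ := ih w' (Ne.symm hune) t htlen
    by_cases hwC : w ∈ C.support
    · exact ⟨b, C, hC, huC, hwC⟩
    -- w ∉ C: construct a new cycle through u and w
    obtain ⟨q0, hq0⟩ := walk_avoiding' h2 w' w u hww'.symm (Ne.symm hune)
    set r0 := q0.bypass with hr0def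
    have hr0path : r0.IsPath := q0.bypass_isPath
    have hw'r0 : w' ∉ r0.support := fun h => hq0 (q0.support_bypass_subset h)
    obtain ⟨x, r, s, hsplit, hxC, hronly⟩ :=
      exists_split_firstHit {y | y ∈ C.support} r0 huC
    have hrpath : r.IsPath := by
      rw [hsplit] at hr0path
      exact hr0path.of_append_left
    have hrsub : ∀ y ∈ r.support, y ∈ r0.support := by
      intro y hy
      rw [hsplit, Walk.mem_support_append_iff]
      exact Or.inl hy
    have hw'r : w' ∉ r.support := fun h => hw'r0 (hrsub _ h)
    have hxw' : x ≠ w' := fun h => hw'r (h ▸ r.end_mem_support)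
    obtain ⟨A, hApath, hAsub, huA⟩ := arc_of_cycle hC hxC hw'C huC hxw'
    set D := r.append A with hDdef
    have hDpath : D.IsPath := by
      apply Walk.IsPath.mk'
      rw [Walk.support_append, List.nodup_append]
      have hAtail : A.support.tail.Nodup := by
        have := hApath.support_nodup
        rw [A.support_eq_cons] at this
        exact this.of_cons
      refine ⟨hrpath.support_nodup, hAtail, ?_⟩
      intro y hyr y₂ hyA hyy
      subst hyy
      have hyC : y ∈ C.support := hAsub y (List.mem_of_mem_tail hyA)
      have hyx : y = x := hronly y hyr hyC
      have hxnot : x ∉ A.support.tail := by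
        have := hApath.support_nodup
        rw [A.support_eq_cons] at this
        exact (List.nodup_cons.mp this).1
      exact hxnot (hyx ▸ hyA)
    have hedge : s(w', w) ∉ D.edges := by
      intro he
      rw [Walk.edges_append, List.mem_append] at he
      rcases he with he | he
      · exact hw'r (r.fst_mem_support_of_mem_edges he)
      · exact hwC (hAsub w (A.snd_mem_support_of_mem_edges he))
    refine ⟨w', Walk.cons hadj D, (Walk.cons_isCycle_iff D hadj).mpr ⟨hDpath, hedge⟩, ?_, ?_⟩
    · rw [Walk.support_cons]
      refine List.mem_cons_of_mem _ ?_
      rw [Walk.mem_support_append_iff]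
      exact Or.inr huA
    · rw [Walk.support_cons]
      exact List.mem_cons_of_mem _ (by rw [Walk.mem_support_append_iff]; exact Or.inl r.start_mem_support)
end
variable {V : Type} {G : SimpleGraph V}

/-- If a path between two `Cs`-vertices is long, it has a long sub-segment whose
endpoints are in `Cs` and whose interior avoids `Cs`. -/
lemma long_segment (N : ℕ) (hN : 1 ≤ N) (Cs : Set V) [DecidablePred (· ∈ Cs)] :
    ∀ (c : ℕ) {x y : V} (P : G.Walk x y), P.IsPath → x ∈ Cs → y ∈ Cs →
    (P.support.tail.filter (fun z => decide (z ∈ Cs))).length ≤ c → N * c < P.length →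
    ∃ (a b : V) (S : G.Walk a b), S.IsPath ∧ N ≤ S.length ∧ a ∈ Cs ∧ b ∈ Cs ∧
      (∀ y' ∈ S.support, y' ∈ Cs → y' = a ∨ y' = b) := by
  intro c
  induction c with
  | zero =>
    intro x y P hP hx hy hcnt hlen
    exfalso
    have hxy : x ≠ y := by
      rintro rfl
      rw [Walk.isPath_iff_eq_nil] at hP
      subst hP
      simp at hlen
    have hyt : y ∈ P.support.tail := end_mem_tail_support_of_ne hxy P
    have : y ∈ P.support.tail.filter (fun z => decide (z ∈ Cs)) :=
      List.mem_filter.mpr ⟨hyt, by simpa using hy⟩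
    have := List.length_pos_iff.mpr (List.ne_nil_of_mem this)
    omega
  | succ c ihc =>
    intro x y P hP hx hy hcnt hlen
    have hlen1 : 1 ≤ P.length := by
      have : 0 ≤ N * (c+1) := Nat.zero_le _
      omega
    cases P with
    | nil => simp at hlen1
    | @cons _ x₂ _ h P₁ =>
      obtain ⟨x₁, r, s, hsplit, hx₁, hronly⟩ := exists_split_firstHit Cs P₁ hy
      have hPeq : Walk.cons h P₁ = (Walk.cons h r).append s := by
        rw [hsplit, Walk.cons_append]
      by_cases hbig : N ≤ (Walk.cons h r).length
      · refine ⟨x, x₁, Walk.cons h r, ?_, hbig, hx, hx₁, ?_⟩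
        · rw [hPeq] at hP
          exact hP.of_append_left
        · intro y' hy' hy'Cs
          rw [Walk.support_cons] at hy'
          rcases List.mem_cons.mp hy' with rfl | hy''
          · exact Or.inl rfl
          · exact Or.inr (hronly y' hy'' hy'Cs)
      · push_neg at hbig
        have hspath : s.IsPath := by
          rw [hPeq] at hP
          exact hP.of_append_right
        have hcnt' : (s.support.tail.filter (fun z => decide (z ∈ Cs))).length ≤ c := by
          have hPtail : (Walk.cons h P₁).support.tail = r.support ++ s.support.tail := by
            rw [Walk.support_cons, List.tail_cons, hsplit, Walk.support_append]
          rw [hPtail, List.filter_append, List.length_append] at hcnt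
          have hx₁r : x₁ ∈ r.support.filter (fun z => decide (z ∈ Cs)) :=
            List.mem_filter.mpr ⟨r.end_mem_support, by simpa using hx₁⟩
          have h1 : 1 ≤ (r.support.filter (fun z => decide (z ∈ Cs))).length :=
            List.length_pos_iff.mpr (List.ne_nil_of_mem hx₁r)
          omega
        have hlen' : N * c < s.length := by
          have hPlen : (Walk.cons h P₁).length = (Walk.cons h r).length + s.length := by
            rw [hPeq, Walk.length_append]
          have hmul : N * (c + 1) = N * c + N := by ring
          omega
        exact ihc s hspath hx₁ hy hcnt' hlen'
lemma long_cycle (hcard : ∃ x y z : V, x ≠ y ∧ x ≠ z ∧ y ≠ z)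
    (h2 : ∀ v : V, (G.induce ({v}ᶜ : Set V)).Connected)
    (hlong : ∀ k : ℕ, ∃ (u v : V) (p : G.Walk u v), p.IsPath ∧ p.length = k)
    (N : ℕ) (hN : 3 ≤ N) :
    ∃ (a : V) (c : G.Walk a a), c.IsCycle ∧ N ≤ c.length := by
  classical
  obtain ⟨x, y, P, hP, hPlen⟩ := hlong (N * N + 1)
  have hxy : x ≠ y := by
    rintro rfl
    rw [Walk.isPath_iff_eq_nil] at hP
    subst hP
    simp at hPlen
  obtain ⟨b₀, C, hC, hxC, hyC⟩ := cycle_through_pair hcard h2 hxy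
  by_cases hCbig : N ≤ C.length
  · exact ⟨b₀, C, hC, hCbig⟩
  push_neg at hCbig
  set Cs : Set V := {y | y ∈ C.support} with hCsdef
  -- count bound
  have htailnodup : P.support.tail.Nodup := by
    have := hP.support_nodup
    rw [P.support_eq_cons] at this
    exact this.of_cons
  have hcnt : (P.support.tail.filter (fun z => decide (z ∈ Cs))).length ≤ N := by
    have hnd : (P.support.tail.filter (fun z => decide (z ∈ Cs))).Nodup :=
      htailnodup.filter _
    have hsub : (P.support.tail.filter (fun z => decide (z ∈ Cs))) ⊆ C.support := by
      intro z hz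
      have := (List.mem_filter.mp hz).2
      simpa [hCsdef] using this
    have hle := (List.subperm_of_subset hnd hsub).length_le
    rw [Walk.length_support] at hle
    omega
  have hseg := long_segment N (by omega) Cs N P hP
    (show x ∈ Cs from hxC) (show y ∈ Cs from hyC) hcnt (by omega)
  obtain ⟨a, b, S, hSpath, hSlen, haCs, hbCs, hint⟩ := hseg
  have hab : a ≠ b := by
    rintro rfl
    rw [Walk.isPath_iff_eq_nil] at hSpath
    subst hSpath
    simp at hSlen
    omega
  obtain ⟨A, hApath, hAsub, -⟩ := arc_of_cycle hC hbCs haCs haCs (Ne.symm hab)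
  -- destructure S
  cases S with
  | nil => exact absurd rfl hab
  | @cons _ a₂ _ h S₁ =>
    have hS₁path : S₁.IsPath := hSpath.of_cons
    have haS₁ : a ∉ S₁.support := by
      have := hSpath.support_nodup
      rw [Walk.support_cons] at this
      exact (List.nodup_cons.mp this).1
    have ha₂ : a₂ ≠ b → a₂ ∉ Cs := by
      intro hne hmem
      rcases hint a₂ (by rw [Walk.support_cons]; exact List.mem_cons_of_mem _ S₁.start_mem_support)
        hmem with h1 | h1
      · exact haS₁ (h1 ▸ S₁.start_mem_support)
      · exact hne h1
    have ha₂b : a₂ ≠ b := by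
      rintro rfl
      rw [Walk.isPath_iff_eq_nil] at hS₁path
      subst hS₁path
      simp at hSlen
      omega
    have hD : (S₁.append A).IsPath := by
      apply Walk.IsPath.mk'
      rw [Walk.support_append, List.nodup_append]
      have hAtail : A.support.tail.Nodup := by
        have := hApath.support_nodup
        rw [A.support_eq_cons] at this
        exact this.of_cons
      refine ⟨hS₁path.support_nodup, hAtail, ?_⟩
      intro z hz1 z₂ hz2 hzz
      subst hzz
      have hzCs : z ∈ Cs := hAsub z (List.mem_of_mem_tail hz2)
      rcases hint z (by rw [Walk.support_cons]; exact List.mem_cons_of_mem _ hz1) hzCs with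
        rfl | rfl
      · exact haS₁ hz1
      · have := hApath.support_nodup
        rw [A.support_eq_cons] at this
        exact (List.nodup_cons.mp this).1 hz2
    have hedge : s(a, a₂) ∉ (S₁.append A).edges := by
      intro he
      rw [Walk.edges_append, List.mem_append] at he
      rcases he with he | he
      · exact haS₁ (S₁.fst_mem_support_of_mem_edges he)
      · exact ha₂ ha₂b (hAsub a₂ (A.snd_mem_support_of_mem_edges he))
    refine ⟨a, Walk.cons h (S₁.append A), (Walk.cons_isCycle_iff _ h).mpr ⟨hD, hedge⟩, ?_⟩
    rw [Walk.length_cons, Walk.length_append]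
    rw [Walk.length_cons] at hSlen
    omega
lemma getVert_injOn_of_isPath {u v : V} {p : G.Walk u v} (hp : p.IsPath) :
    ∀ i ≤ p.length, ∀ j ≤ p.length, p.getVert i = p.getVert j → i = j := by
  induction p with
  | nil => intro i hi j hj _; simp only [Walk.length_nil] at hi hj; omega
  | @cons u' x' v' h p' ih =>
    intro i hi j hj heq
    have hp' : p'.IsPath := hp.of_cons
    have hu' : u' ∉ p'.support := by
      have := hp.support_nodup
      rw [Walk.support_cons] at this
      exact (List.nodup_cons.mp this).1
    match i, j with
    | 0, 0 => rfl
    | 0, j + 1 =>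
      exfalso
      rw [Walk.getVert_zero, Walk.getVert_cons_succ] at heq
      exact hu' (Walk.mem_support_iff_exists_getVert.mpr ⟨j, heq.symm, by
        rw [Walk.length_cons] at hj; omega⟩)
    | i + 1, 0 =>
      exfalso
      rw [Walk.getVert_zero, Walk.getVert_cons_succ] at heq
      exact hu' (Walk.mem_support_iff_exists_getVert.mpr ⟨i, heq, by
        rw [Walk.length_cons] at hi; omega⟩)
    | i + 1, j + 1 =>
      rw [Walk.getVert_cons_succ, Walk.getVert_cons_succ] at heq
      rw [Walk.length_cons] at hi hj
      have := ih hp' i (by omega) j (by omega) heq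
      omega

lemma getVert_injOn_of_isCycle {a : V} {c : G.Walk a a} (hc : c.IsCycle) :
    ∀ i ≤ c.length - 1, ∀ j ≤ c.length - 1, c.getVert i = c.getVert j → i = j := by
  have h3 := hc.three_le_length
  cases c with
  | nil => simp at h3
  | @cons _ x' _ h p =>
    have hp : p.IsPath := ((Walk.cons_isCycle_iff p h).mp hc).1
    rw [Walk.length_cons]
    intro i hi j hj heq
    match i, j with
    | 0, 0 => rfl
    | 0, j + 1 =>
      exfalso
      rw [Walk.getVert_zero, Walk.getVert_cons_succ] at heq
      have hend : p.getVert p.length = a := p.getVert_length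
      have := getVert_injOn_of_isPath hp j (by omega) p.length le_rfl (by rw [hend, ← heq])
      rw [Walk.length_cons] at h3
      omega
    | i + 1, 0 =>
      exfalso
      rw [Walk.getVert_zero, Walk.getVert_cons_succ] at heq
      have hend : p.getVert p.length = a := p.getVert_length
      have := getVert_injOn_of_isPath hp i (by omega) p.length le_rfl (by rw [hend, heq])
      rw [Walk.length_cons] at h3
      omega
    | i + 1, j + 1 =>
      rw [Walk.getVert_cons_succ, Walk.getVert_cons_succ] at heq
      have := getVert_injOn_of_isPath hp i (by omega) j (by omega) heq
      omega

lemma induce_singleton_connected (G : SimpleGraph V) (x : V) :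
    (G.induce ({x} : Set V)).Connected := by
  haveI : Nonempty ↥({x} : Set V) := ⟨⟨x, rfl⟩⟩
  refine ⟨?_⟩
  rintro ⟨p, hp⟩ ⟨q, hq⟩
  have : p = q := by
    simp only [Set.mem_singleton_iff] at hp hq
    rw [hp, hq]
  subst this
  rfl
theorem stmt_7' (n : ℕ) (hn : 3 ≤ n) {V : Type} (G : SimpleGraph V)
    (hcard : ∃ x y z : V, x ≠ y ∧ x ≠ z ∧ y ≠ z)
    (h2conn : ∀ v : V, (G.induce ({v}ᶜ : Set V)).Connected)
    (hlong : ∀ k : ℕ, ∃ (u v : V) (p : G.Walk u v), p.IsPath ∧ p.length = k) :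
    ∃ B : Fin n → Set V,
      (∀ w, (B w).Nonempty) ∧ (∀ w, (G.induce (B w)).Connected) ∧
      (Pairwise fun w w' => Disjoint (B w) (B w')) ∧
      (∀ ⦃w w'⦄, (cycleGraph n).Adj w w' → ∃ u ∈ B w, ∃ v ∈ B w', G.Adj u v) := by
  classical
  obtain ⟨a, c, hc, hclen⟩ := long_cycle hcard h2conn hlong n hn
  set m := c.length with hm
  have hnm : n ≤ m := hclen
  set v : ℕ → V := c.getVert with hv
  have hinj : ∀ i ≤ m - 1, ∀ j ≤ m - 1, v i = v j → i = j := getVert_injOn_of_isCycle hc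
  have hadjv : ∀ i, i < m → G.Adj (v i) (v (i + 1)) := fun i hi => c.adj_getVert_succ hi
  have hv0 : v m = v 0 := by rw [hv, c.getVert_length, c.getVert_zero]
  set Bb : Set V := {w | ∃ j, n - 1 ≤ j ∧ j < m ∧ v j = w} with hBb
  set B : Fin n → Set V := fun i => if i.val < n - 1 then {v i.val} else Bb with hB
  have memB : ∀ (i : Fin n) (w : V), w ∈ B i →
      ∃ jdx, jdx ≤ m - 1 ∧ v jdx = w ∧ (i.val < n - 1 → jdx = i.val) ∧
        (¬(i.val < n - 1) → n - 1 ≤ jdx) := by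
    intro i w hw
    by_cases hi : i.val < n - 1
    · rw [hB] at hw
      simp only [if_pos hi, Set.mem_singleton_iff] at hw
      exact ⟨i.val, by omega, hw.symm, fun _ => rfl, fun h => absurd hi h⟩
    · rw [hB] at hw
      simp only [if_neg hi, hBb, Set.mem_setOf_eq] at hw
      obtain ⟨jdx, h1, h2, h3⟩ := hw
      exact ⟨jdx, by omega, h3, fun h => absurd h hi, fun _ => h1⟩
  refine ⟨B, ?_, ?_, ?_, ?_⟩
  · -- nonempty
    intro i
    by_cases hi : i.val < n - 1
    · exact ⟨v i.val, by rw [hB]; simp only [if_pos hi]; rfl⟩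
    · exact ⟨v (n - 1), by rw [hB]; simp only [if_neg hi]; exact ⟨n - 1, le_rfl, by omega, rfl⟩⟩
  · -- connected
    intro i
    by_cases hi : i.val < n - 1
    · rw [hB]
      dsimp only
      rw [if_pos hi]
      exact induce_singleton_connected G _
    · rw [hB]
      dsimp only
      rw [if_neg hi]
      have hbase : v (n - 1) ∈ Bb := ⟨n - 1, le_rfl, by omega, rfl⟩
      have hreach : ∀ j, n - 1 ≤ j → j < m → ∃ (hmem : v j ∈ Bb),
          (G.induce Bb).Reachable ⟨v (n - 1), hbase⟩ ⟨v j, hmem⟩ := by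
        intro j hj1
        induction j, hj1 using Nat.le_induction with
        | base => exact fun _ => ⟨hbase, Reachable.refl _⟩
        | succ j hj ih =>
          intro hj2
          obtain ⟨hmem, hr⟩ := ih (by omega)
          have hmem' : v (j + 1) ∈ Bb := ⟨j + 1, by omega, hj2, rfl⟩
          refine ⟨hmem', hr.trans (Adj.reachable ?_)⟩
          exact hadjv j (by omega)
      haveI : Nonempty ↥Bb := ⟨⟨v (n - 1), hbase⟩⟩
      refine ⟨?_⟩
      rintro ⟨w1, hw1⟩ ⟨w2, hw2⟩
      obtain ⟨j1, h1a, h1b, rfl⟩ := hw1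
      obtain ⟨j2, h2a, h2b, rfl⟩ := hw2
      obtain ⟨hm1, hr1⟩ := hreach j1 h1a h1b
      obtain ⟨hm2, hr2⟩ := hreach j2 h2a h2b
      exact hr1.symm.trans hr2
  · -- pairwise disjoint
    intro i j hne
    rw [Set.disjoint_left]
    intro w hwi hwj
    obtain ⟨j1, hj1, hvj1, hs1, hb1⟩ := memB i w hwi
    obtain ⟨j2, hj2, hvj2, hs2, hb2⟩ := memB j w hwj
    have hj12 : j1 = j2 := hinj j1 hj1 j2 hj2 (by rw [hvj1, hvj2])
    have hiLt := i.isLt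
    have hjLt := j.isLt
    by_cases hi : i.val < n - 1 <;> by_cases hj : j.val < n - 1
    · exact hne (Fin.ext (by have := hs1 hi; have := hs2 hj; omega))
    · have := hs1 hi; have := hb2 hj; omega
    · have := hb1 hi; have := hs2 hj; omega
    · exact hne (Fin.ext (by omega))
  · -- adjacency
    have hval : ∀ (i j : Fin n), (j - i).val = 1 → j.val = (i.val + 1) % n := by
      intro i j h
      haveI : NeZero n := ⟨by omega⟩
      have h2 : i + (j - i) = j := by rw [add_comm]; exact sub_add_cancel j i
      have h3 := congrArg Fin.val h2
      rw [Fin.add_def, h] at h3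
      exact h3.symm
    have key : ∀ (i j : Fin n), j.val = (i.val + 1) % n →
        ∃ u ∈ B i, ∃ w ∈ B j, G.Adj u w := by
      intro i j hij
      have hiLt := i.isLt
      have hjLt := j.isLt
      by_cases hi : i.val < n - 1
      · have hjv : j.val = i.val + 1 := by
          rw [hij, Nat.mod_eq_of_lt (by omega)]
        refine ⟨v i.val, ?_, v (i.val + 1), ?_, hadjv i.val (by omega)⟩
        · rw [hB]; simp only [if_pos hi]; rfl
        · by_cases hj : j.val < n - 1
          · rw [hB]; simp only [if_pos hj, Set.mem_singleton_iff]; rw [hjv]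
          · rw [hB]; simp only [if_neg hj]; exact ⟨i.val + 1, by omega, by omega, rfl⟩
      · have hival : i.val = n - 1 := by omega
        have hjv : j.val = 0 := by
          rw [hij, hival, show n - 1 + 1 = n by omega, Nat.mod_self]
        refine ⟨v (m - 1), ?_, v 0, ?_, ?_⟩
        · rw [hB]; simp only [if_neg hi]; exact ⟨m - 1, by omega, by omega, rfl⟩
        · rw [hB]; simp only [if_pos (show j.val < n - 1 by omega), Set.mem_singleton_iff]
          rw [hjv]
        · have h4 := hadjv (m - 1) (by omega)
          rwa [show m - 1 + 1 = m by omega, hv0] at h4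
    intro i j hadj
    rw [cycleGraph_adj'] at hadj
    rcases hadj with h | h
    · obtain ⟨u, hu, w, hw, huw⟩ := key j i (hval j i h)
      exact ⟨w, hw, u, hu, huw.symm⟩
    · exact key i j (hval i j h)

end Helpers

/-- For every `n ≥ 3`, the cycle `C_n` is a minor of every 2-connected graph
containing arbitrarily long paths. -/
theorem stmt_7 (n : ℕ) (hn : 3 ≤ n) {V : Type} [Countable V] (G : SimpleGraph V)
    (hcard : ∃ x y z : V, x ≠ y ∧ x ≠ z ∧ y ≠ z)
    (h2conn : ∀ v : V, (G.induce ({v}ᶜ : Set V)).Connected)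
    (hlong : ∀ k : ℕ, HasPathLen G k) :
    IsMinorOf (cycleGraph n) G := by
  obtain ⟨B, h1, h2, h3, h4⟩ := stmt_7' n hn G hcard h2conn hlong
  exact ⟨B, h1, h2, h3, h4⟩
end

section
/- Let D be a cycle in a graph and let D′ be a cycle with |V(D′)| ≥ |V(D)|·m that intersects D in at least 2 vertices. Then D′ contains a D-path (a path with both endvertices on D and no inner vertex on D) of length at least m. -/
open SimpleGraph

open List in
section
open SimpleGraph List

namespace CycleAux

variable {V : Type*} {G : SimpleGraph V}

lemma end_mem_tail {x y : V} (p : G.Walk x y) (h : p.length ≠ 0) :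
    y ∈ p.support.tail := by
  cases p with
  | nil => simp at h
  | cons h' q => simpa using q.end_mem_support

section cnt

variable (S : Set V) [DecidablePred (· ∈ S)] [DecidableEq V]

/-- number of `S`-vertices in a list -/
def cnt (l : List V) : ℕ := (l.filter (fun v => v ∈ S)).length

lemma cnt_append (l₁ l₂ : List V) : cnt S (l₁ ++ l₂) = cnt S l₁ + cnt S l₂ := by
  simp [cnt, List.filter_append]

lemma cnt_cons_of_mem {a : V} (ha : a ∈ S) (l : List V) :
    cnt S (a :: l) = cnt S l + 1 := by
  simp [cnt, List.filter_cons, ha]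

lemma cnt_cons_le (a : V) (l : List V) : cnt S (a :: l) ≤ cnt S l + 1 := by
  by_cases ha : a ∈ S
  · simp [cnt, List.filter_cons, ha]
  · simp [cnt, List.filter_cons, ha]

lemma cnt_le_card (l : List V) (hl : l.Nodup) (s : Finset V)
    (h : ∀ v ∈ l, v ∈ S → v ∈ s) : cnt S l ≤ s.card := by
  have hn : (l.filter (fun v => v ∈ S)).Nodup := hl.filter _
  rw [cnt, ← List.toFinset_card_of_nodup hn]
  apply Finset.card_le_card
  intro v hv
  rw [List.mem_toFinset, List.mem_filter] at hv
  exact h v hv.1 (by simpa using hv.2)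

lemma two_le_cnt (l : List V) (hl : l.Nodup) {x z : V} (hx : x ∈ l) (hz : z ∈ l)
    (hxz : x ≠ z) (hxS : x ∈ S) (hzS : z ∈ S) : 2 ≤ cnt S l := by
  have hn : (l.filter (fun v => v ∈ S)).Nodup := hl.filter _
  rw [cnt, ← List.toFinset_card_of_nodup hn]
  have hsub : ({x, z} : Finset V) ⊆ (l.filter (fun v => v ∈ S)).toFinset := by
    intro v hv
    rw [List.mem_toFinset, List.mem_filter]
    rcases Finset.mem_insert.1 hv with rfl | hv
    · exact ⟨hx, by simpa using hxS⟩
    · rw [Finset.mem_singleton] at hv; subst hv; exact ⟨hz, by simpa using hzS⟩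
  calc 2 = ({x, z} : Finset V).card := by rw [Finset.card_insert_of_notMem (by simpa using hxz), Finset.card_singleton]
    _ ≤ _ := Finset.card_le_card hsub

lemma cnt_eq_two (l : List V) (hl : l.Nodup) {x z : V} (hx : x ∈ l) (hz : z ∈ l)
    (hxz : x ≠ z) (hxS : x ∈ S) (hzS : z ∈ S)
    (hother : ∀ v ∈ l, v ∈ S → v = x ∨ v = z) : cnt S l = 2 := by
  have hn : (l.filter (fun v => v ∈ S)).Nodup := hl.filter _
  rw [cnt, ← List.toFinset_card_of_nodup hn]
  have heq : (l.filter (fun v => v ∈ S)).toFinset = ({x, z} : Finset V) := by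
    apply Finset.Subset.antisymm
    · intro v hv
      rw [List.mem_toFinset, List.mem_filter] at hv
      rcases hother v hv.1 (by simpa using hv.2) with rfl | rfl
      · exact Finset.mem_insert_self _ _
      · exact Finset.mem_insert_of_mem (Finset.mem_singleton_self _)
    · intro v hv
      rw [List.mem_toFinset, List.mem_filter]
      rcases Finset.mem_insert.1 hv with rfl | hv
      · exact ⟨hx, by simpa using hxS⟩
      · rw [Finset.mem_singleton] at hv; subst hv; exact ⟨hz, by simpa using hzS⟩
  rw [heq, Finset.card_insert_of_notMem (by simpa using hxz), Finset.card_singleton]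

end cnt

lemma peel (S : Set V) :
    ∀ {x y : V} (p : G.Walk x y), p.IsPath → (∃ v ∈ p.support.tail, v ∈ S) →
    ∃ (z : V) (q1 : G.Walk x z) (q2 : G.Walk z y), p = q1.append q2 ∧ z ∈ S ∧
      1 ≤ q1.length ∧ z ∈ p.support.tail ∧
      (∀ v ∈ q1.support, v ≠ x → v ≠ z → v ∉ S) := by
  intro x y p
  induction p with
  | nil => rintro _ ⟨v, hv, _⟩; simp at hv
  | @cons x w y h p' ih =>
    intro hp hex
    by_cases hw : w ∈ S
    · refine ⟨w, Walk.cons h Walk.nil, p', by simp, hw, by simp, ?_, ?_⟩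
      · simpa using p'.start_mem_support
      · intro v hv hvx hvw
        have hv2 : v = x ∨ v = w := by simpa using hv
        rcases hv2 with rfl | rfl
        · exact absurd rfl hvx
        · exact absurd rfl hvw
    · obtain ⟨v, hv, hvS⟩ := hex
      simp only [Walk.support_cons, List.tail_cons] at hv
      have hvw : v ≠ w := fun h' => hw (h' ▸ hvS)
      have hv' : v ∈ p'.support.tail := by
        rw [p'.support_eq_cons] at hv
        rcases List.mem_cons.1 hv with h2 | h2
        · exact absurd h2 hvw
        · exact h2
      obtain ⟨z, q1', q2', hspec, hzS, hlen, hzt, hinner⟩ :=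
        ih hp.of_cons ⟨v, hv', hvS⟩
      refine ⟨z, Walk.cons h q1', q2', by rw [Walk.cons_append, ← hspec], hzS,
        by simp [Walk.length_cons], ?_, ?_⟩
      · simp only [Walk.support_cons, List.tail_cons]
        exact List.mem_of_mem_tail hzt
      · intro v' hv' hvx hvz
        simp only [Walk.support_cons, List.mem_cons] at hv'
        rcases hv' with rfl | hv'
        · exact absurd rfl hvx
        · by_cases hvw' : v' = w
          · subst hvw'; exact hw
          · exact hinner v' hv' hvw' hvz

end CycleAux

namespace CycleAux

variable {V : Type*} {G : SimpleGraph V}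

lemma segment_of_long (S : Set V) [DecidablePred (· ∈ S)] [DecidableEq V]
    (m : ℕ) (hm : 1 ≤ m) :
    ∀ n {x y : V} (p : G.Walk x y), p.length ≤ n → p.IsPath → x ∈ S → y ∈ S → x ≠ y →
      m * (cnt S p.support - 1) ≤ p.length →
      ∃ (a b : V) (q : G.Walk a b), q.IsPath ∧ (∀ e ∈ q.edges, e ∈ p.edges) ∧ a ∈ S ∧ b ∈ S ∧
        (∀ v ∈ q.support, v ≠ a → v ≠ b → v ∉ S) ∧ m ≤ q.length := by
  intro n
  induction n using Nat.strong_induction_on with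
  | _ n ihn =>
  intro x y p hpn hp hx hy hxy hcount
  have hc2 : 2 ≤ cnt S p.support :=
    two_le_cnt S _ hp.support_nodup p.start_mem_support p.end_mem_support hxy hx hy
  have hplen : p.length ≠ 0 := fun h0 => hxy (Walk.eq_of_length_eq_zero h0)
  have hyt : y ∈ p.support.tail := end_mem_tail p hplen
  obtain ⟨z, q1, q2, hspec, hzS, h1, hzt, hinner⟩ := peel S p hp ⟨y, hyt, hy⟩
  have hxt : x ∉ p.support.tail := by
    have hnd := hp.support_nodup
    rw [p.support_eq_cons] at hnd
    exact (List.nodup_cons.1 hnd).1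
  have hzx : z ≠ x := fun h => hxt (h ▸ hzt)
  have hq1path : q1.IsPath := by rw [hspec] at hp; exact hp.of_append_left
  have hq2path : q2.IsPath := by rw [hspec] at hp; exact hp.of_append_right
  have hlenpq : p.length = q1.length + q2.length := by rw [hspec, Walk.length_append]
  have hedge1 : ∀ e ∈ q1.edges, e ∈ p.edges := by
    intro e he; rw [hspec, Walk.edges_append, List.mem_append]; exact Or.inl he
  have hedge2 : ∀ e ∈ q2.edges, e ∈ p.edges := by
    intro e he; rw [hspec, Walk.edges_append, List.mem_append]; exact Or.inr he
  by_cases hq1m : m ≤ q1.length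
  · exact ⟨x, z, q1, hq1path, hedge1, hx, hzS, hinner, hq1m⟩
  · push_neg at hq1m
    by_cases hzy : z = y
    · subst hzy
      exfalso
      have h20 : q2.length = 0 := by
        by_contra h0
        have hmt := end_mem_tail q2 h0
        have hnd := hq2path.support_nodup
        rw [q2.support_eq_cons] at hnd
        exact (List.nodup_cons.1 hnd).1 hmt
      have hge : m * 1 ≤ m * (cnt S p.support - 1) :=
        Nat.mul_le_mul_left m (by omega)
      omega
    · have hq1sup : cnt S q1.support = 2 := by
        refine cnt_eq_two S _ hq1path.support_nodup q1.start_mem_support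
          q1.end_mem_support hzx.symm hx hzS ?_
        intro v hv hvS
        by_contra hcon
        push_neg at hcon
        exact hinner v hv hcon.1 hcon.2 hvS
      have hsupp : p.support = q1.support ++ q2.support.tail := by
        rw [hspec, Walk.support_append]
      have hcnt : cnt S p.support = 2 + cnt S q2.support.tail := by
        rw [hsupp, cnt_append, hq1sup]
      have hcntq2 : cnt S q2.support = cnt S q2.support.tail + 1 := by
        have h' := cnt_cons_of_mem S hzS q2.support.tail
        rw [← q2.support_eq_cons] at h'
        exact h'
      have hc2' : 2 ≤ cnt S q2.support :=
        two_le_cnt S _ hq2path.support_nodup q2.start_mem_support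
          q2.end_mem_support hzy hzS hy
      have hkey : m * (cnt S p.support - 1) = m * (cnt S q2.support - 1) + m := by
        have h3 : cnt S p.support - 1 = (cnt S q2.support - 1) + 1 := by omega
        rw [h3, Nat.mul_add, Nat.mul_one]
      have hcq2 : m * (cnt S q2.support - 1) ≤ q2.length := by omega
      obtain ⟨a, b, q, hq, hqe, haS, hbS, hqin, hql⟩ :=
        ihn (n - 1) (by omega) q2 (by omega) hq2path hzS hy hzy hcq2
      exact ⟨a, b, q, hq, fun e he => hedge2 e (hqe e he), haS, hbS, hqin, hql⟩

end CycleAux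

end

/-- If `d'` is a cycle with at least `d.length * m` vertices meeting a cycle `d` in at
least two vertices, then `d'` contains a `d`-path of length at least `m`. -/
theorem stmt_9 {V : Type*} (G : SimpleGraph V) (m : ℕ) (hm : 1 ≤ m)
    {u u' : V} (d : G.Walk u u) (d' : G.Walk u' u')
    (hd : d.IsCycle) (hd' : d'.IsCycle)
    (hlen : d.length * m ≤ d'.length)
    (hmeet : ∃ a b : V, a ≠ b ∧ a ∈ d.support ∧ a ∈ d'.support ∧
      b ∈ d.support ∧ b ∈ d'.support) :
    ∃ (x y : V) (p : G.Walk x y), p.IsPath ∧ (∀ e ∈ p.edges, e ∈ d'.edges) ∧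
      x ∈ d.support ∧ y ∈ d.support ∧
      (∀ v ∈ p.support, v ≠ x → v ≠ y → v ∉ d.support) ∧
      m ≤ p.length := by
  classical
  obtain ⟨a, b, hab, haD, haD', hbD, hbD'⟩ := hmeet
  set S : Set V := {v | v ∈ d.support} with hS
  have haS : a ∈ S := haD
  have hbS : b ∈ S := hbD
  have hd'len : d'.length ≠ 0 := fun h0 => hd'.not_nil (Walk.length_eq_zero_iff.1 h0)
  have hu't : u' ∈ d'.support.tail := CycleAux.end_mem_tail d' hd'len
  have hbt : b ∈ d'.support.tail := by
    rcases List.mem_cons.1 (by rw [← d'.support_eq_cons]; exact hbD') with h | h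
    · exact h ▸ hu't
    · exact h
  set d'' := d'.rotate a haD' with hd''def
  have hd''c : d''.IsCycle := hd'.rotate haD'
  have hrot := Walk.support_rotate d' a haD'
  have hb'' : b ∈ d''.support := List.mem_of_mem_tail (hrot.perm.mem_iff.2 hbt)
  set q1 := d''.takeUntil b hb'' with hq1def
  set q2 := d''.dropUntil b hb'' with hq2def
  have hspec : q1.append q2 = d'' := Walk.take_spec d'' hb''
  have htails : d''.support.tail = q1.support.tail ++ q2.support.tail := by
    rw [← hspec, Walk.support_append, q1.support_eq_cons]
    rfl
  have hnd := hd''c.support_nodup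
  rw [htails] at hnd
  obtain ⟨hnd1, hnd2, hdisj⟩ := List.nodup_append.1 hnd
  have hq1len : q1.length ≠ 0 := fun h0 => hab (Walk.eq_of_length_eq_zero h0)
  have hq2len : q2.length ≠ 0 := fun h0 => hab ((Walk.eq_of_length_eq_zero h0).symm)
  have hbq1 : b ∈ q1.support.tail := CycleAux.end_mem_tail q1 hq1len
  have haq2 : a ∈ q2.support.tail := CycleAux.end_mem_tail q2 hq2len
  have hq1path : q1.IsPath := by
    rw [Walk.isPath_def, q1.support_eq_cons, List.nodup_cons]
    exact ⟨fun h => hdisj _ h _ haq2 rfl, hnd1⟩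
  have hq2path : q2.IsPath := by
    rw [Walk.isPath_def, q2.support_eq_cons, List.nodup_cons]
    exact ⟨fun h => hdisj _ hbq1 _ h rfl, hnd2⟩
  have hlen''0 : q1.length + q2.length = d''.length := by
    have h' := congrArg Walk.length hspec
    rwa [Walk.length_append] at h'
  have hdd : d''.length = d'.length := by
    have h1 := congrArg Walk.length (Walk.take_spec d' haD')
    rw [Walk.length_append] at h1
    rw [hd''def]
    show (((d'.dropUntil a haD').append (d'.takeUntil a haD'))).length = d'.length
    rw [Walk.length_append]
    omega
  have hlen'' : q1.length + q2.length = d'.length := by rw [hlen''0, hdd]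
  have hdlen : d.length ≠ 0 := fun h0 => hd.not_nil (Walk.length_eq_zero_iff.1 h0)
  set s : Finset V := d.support.tail.toFinset with hsdef
  have hscard : s.card = d.length := by
    rw [hsdef, List.toFinset_card_of_nodup hd.support_nodup]
    simp [Walk.length_support]
  have hmemS : ∀ v, v ∈ S → v ∈ s := by
    intro v hv
    rw [hsdef, List.mem_toFinset]
    have hv' : v ∈ d.support := hv
    rcases List.mem_cons.1 (by rw [← d.support_eq_cons]; exact hv') with h | h
    · exact h ▸ CycleAux.end_mem_tail d hdlen
    · exact h
  have hcnt_tail : CycleAux.cnt S d''.support.tail ≤ d.length := by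
    have h' := CycleAux.cnt_le_card S _ hd''c.support_nodup s (fun v _ hv => hmemS v hv)
    omega
  have hcnt_supp : CycleAux.cnt S d''.support ≤ d.length + 1 := by
    have h' := CycleAux.cnt_cons_le S a d''.support.tail
    rw [← d''.support_eq_cons] at h'
    omega
  have hcnt_split : CycleAux.cnt S d''.support
      = CycleAux.cnt S q1.support + CycleAux.cnt S q2.support.tail := by
    rw [← hspec, Walk.support_append, CycleAux.cnt_append]
  have hcntq2 : CycleAux.cnt S q2.support = CycleAux.cnt S q2.support.tail + 1 := by
    have h' := CycleAux.cnt_cons_of_mem S hbS q2.support.tail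
    rw [← q2.support_eq_cons] at h'
    exact h'
  have hc1 : 2 ≤ CycleAux.cnt S q1.support :=
    CycleAux.two_le_cnt S _ hq1path.support_nodup q1.start_mem_support
      q1.end_mem_support hab haS hbS
  have hc2 : 2 ≤ CycleAux.cnt S q2.support :=
    CycleAux.two_le_cnt S _ hq2path.support_nodup q2.start_mem_support
      q2.end_mem_support (Ne.symm hab) hbS haS
  have hsum : m * (CycleAux.cnt S q1.support - 1) ≤ q1.length ∨
      m * (CycleAux.cnt S q2.support - 1) ≤ q2.length := by
    by_contra hcon
    push_neg at hcon
    have hmul : m * ((CycleAux.cnt S q1.support - 1) + (CycleAux.cnt S q2.support - 1))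
        ≤ m * d.length := Nat.mul_le_mul_left m (by omega)
    rw [Nat.mul_add] at hmul
    have hdm : m * d.length ≤ d'.length := by rw [Nat.mul_comm]; exact hlen
    omega
  have hedgeq1 : ∀ e ∈ q1.edges, e ∈ d'.edges := fun e he =>
    ((Walk.rotate_edges d' a haD').perm.mem_iff).1 (Walk.edges_takeUntil_subset d'' hb'' he)
  have hedgeq2 : ∀ e ∈ q2.edges, e ∈ d'.edges := fun e he =>
    ((Walk.rotate_edges d' a haD').perm.mem_iff).1 (Walk.edges_dropUntil_subset d'' hb'' he)
  rcases hsum with h | h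
  · obtain ⟨x, y, q, hq, hqe, hxS, hyS, hqin, hql⟩ :=
      CycleAux.segment_of_long S m hm q1.length q1 le_rfl hq1path haS hbS hab h
    exact ⟨x, y, q, hq, fun e he => hedgeq1 e (hqe e he), hxS, hyS, hqin, hql⟩
  · obtain ⟨x, y, q, hq, hqe, hxS, hyS, hqin, hql⟩ :=
      CycleAux.segment_of_long S m hm q2.length q2 le_rfl hq2path hbS haS (Ne.symm hab) h
    exact ⟨x, y, q, hq, fun e he => hedgeq2 e (hqe e he), hxS, hyS, hqin, hql⟩
end

section
/- For every vertex v of the graph D_{k+1}, the wheel W_k is a minor of D_{k+1} − v; likewise W_k is a minor of O_{k+1} − v and of M_{k+1} − v for every vertex v, and K_{3,k} is a minor of K_{4,k+1} − v for every vertex v. -/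
open SimpleGraph

/-- The wheel `W_k`: a cycle of length `k` (on `ZMod k`) plus a hub `none` adjacent to
all cycle vertices. -/
def wheel (k : ℕ) : SimpleGraph (Option (ZMod k)) :=
  SimpleGraph.fromRel (fun a b =>
    match a, b with
    | none, some _ => True
    | some i, some j => j = i + 1
    | _, _ => False)

/-- `D_k`: a cycle of length `k` plus two additional nonadjacent vertices each adjacent
to all cycle vertices. -/
def Dgraph (k : ℕ) : SimpleGraph (ZMod k ⊕ Fin 2) :=
  SimpleGraph.fromRel (fun a b =>
    match a, b with
    | .inl i, .inl j => j = i + 1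
    | .inl _, .inr _ => True
    | _, _ => False)

/-- `O_k`: the circular ladder on `2k` vertices. -/
def Ograph (k : ℕ) : SimpleGraph (ZMod k × ZMod 2) :=
  SimpleGraph.fromRel (fun p q =>
    (p.2 = q.2 ∧ q.1 = p.1 + 1) ∨ (p.1 = q.1 ∧ q.2 = p.2 + 1))

/-- `M_k`: the Möbius ladder on `2k` vertices. -/
def Mgraph (k : ℕ) : SimpleGraph (ZMod (2 * k)) :=
  SimpleGraph.fromRel (fun i j => j = i + 1 ∨ j = i + k)

/-- `R_2`: a ray `0, 1, 2, …` plus two nonadjacent vertices each adjacent to every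
vertex of the ray. -/
def R2 : SimpleGraph (ℕ ⊕ Fin 2) :=
  SimpleGraph.fromRel (fun a b =>
    match a, b with
    | .inl i, .inl j => j = i + 1
    | .inl _, .inr _ => True
    | _, _ => False)

lemma conn_single {V : Type*} (G : SimpleGraph V) (x : V) :
    (G.induce ({x} : Set V)).Connected := by
  rw [connected_iff_exists_forall_reachable]
  refine ⟨⟨x, rfl⟩, fun w => ?_⟩
  have : w = ⟨x, rfl⟩ := Subtype.ext w.2
  rw [this]

lemma conn_pair {V : Type*} (G : SimpleGraph V) {x y : V} (h : G.Adj x y) :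
    (G.induce ({x, y} : Set V)).Connected := by
  rw [connected_iff_exists_forall_reachable]
  refine ⟨⟨x, Or.inl rfl⟩, fun w => ?_⟩
  rcases w.2 with h1 | h1
  · have : w = ⟨x, Or.inl rfl⟩ := Subtype.ext h1
    rw [this]
  · have : w = ⟨y, Or.inr rfl⟩ := Subtype.ext h1
    rw [this]
    exact Adj.reachable (by exact h)

lemma conn_Ico {V : Type*} (G : SimpleGraph V) (ι : ℕ → V) (lo hi : ℕ) (hlt : lo < hi)
    (hadj : ∀ i, lo ≤ i → i + 1 < hi → G.Adj (ι i) (ι (i+1))) :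
    (G.induce (ι '' {x | lo ≤ x ∧ x < hi})).Connected := by
  rw [connected_iff_exists_forall_reachable]
  refine ⟨⟨ι lo, lo, ⟨le_refl _, hlt⟩, rfl⟩, fun w => ?_⟩
  obtain ⟨i, ⟨hi1, hi2⟩, hw⟩ := w.2
  have key : ∀ d (hd : lo + d < hi),
      (G.induce (ι '' {x | lo ≤ x ∧ x < hi})).Reachable ⟨ι lo, lo, ⟨le_refl _, hlt⟩, rfl⟩
        ⟨ι (lo + d), lo + d, ⟨Nat.le_add_right _ _, hd⟩, rfl⟩ := by
    intro d
    induction d with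
    | zero => intro _; rfl
    | succ m ih =>
      intro hm
      have hm' : lo + m < hi := by omega
      refine (ih hm').trans (Adj.reachable ?_)
      have : G.Adj (ι (lo + m)) (ι (lo + m + 1)) := hadj _ (Nat.le_add_right _ _) (by omega)
      exact this
  have : w = ⟨ι (lo + (i - lo)), lo + (i - lo), ⟨Nat.le_add_right _ _, by omega⟩, rfl⟩ := by
    apply Subtype.ext
    simp only []
    rw [← hw]; congr 1; omega
  rw [this]
  exact key _ (by omega)

lemma minor_induce {V W : Type*} (G : SimpleGraph V) (H : SimpleGraph W) (s : Set V)
    (B : W → Set V)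
    (hsub : ∀ w, B w ⊆ s)
    (hne : ∀ w, (B w).Nonempty)
    (hconn : ∀ w, (G.induce (B w)).Connected)
    (hdisj : Pairwise fun w w' => Disjoint (B w) (B w'))
    (hadj : ∀ ⦃w w'⦄, H.Adj w w' → ∃ u ∈ B w, ∃ v' ∈ B w', G.Adj u v') :
    IsMinorOf H (G.induce s) := by
  refine ⟨fun w => Subtype.val ⁻¹' B w, ?_, ?_, ?_, ?_⟩
  · intro w
    obtain ⟨x, hx⟩ := hne w
    exact ⟨⟨x, hsub w hx⟩, hx⟩
  · intro w
    have e : ((G.induce s).induce (Subtype.val ⁻¹' B w)) ≃g (G.induce (B w)) := by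
      refine ⟨⟨fun x => ⟨x.1.1, x.2⟩, fun x => ⟨⟨x.1, hsub w x.2⟩, x.2⟩, fun x => rfl,
        fun x => rfl⟩, ?_⟩
      intro a b
      rfl
    exact e.connected_iff.mpr (hconn w)
  · intro w w' hww
    exact Set.disjoint_left.mpr fun x hx hx' =>
      Set.disjoint_left.mp (hdisj hww) hx hx'
  · intro w w' h
    obtain ⟨u, hu, v', hv', huv⟩ := hadj h
    exact ⟨⟨u, hsub w hu⟩, hu, ⟨v', hsub w' hv'⟩, hv', huv⟩

lemma disj_images {V W : Type*} (ι : ℕ → V) (n : ℕ)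
    (hι : ∀ i < n, ∀ j < n, ι i = ι j → i = j)
    (N : W → Set ℕ) (hNsub : ∀ w, N w ⊆ Set.Iio n)
    (hNdisj : Pairwise fun w w' => Disjoint (N w) (N w')) :
    Pairwise fun w w' => Disjoint ((ι '' N w)) ((ι '' N w')) := by
  intro w w' hww
  rw [Set.disjoint_left]
  rintro x ⟨i, hi, rfl⟩ ⟨j, hj, hij⟩
  have : j = i := hι j (hNsub w' hj) i (hNsub w hi) hij
  exact Set.disjoint_left.mp (hNdisj hww) hi (this ▸ hj)

lemma cast_ne {n : ℕ} [NeZero n] {i j : ℕ} (hi : i < n) (hj : j < n) (hij : i ≠ j) :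
    (i : ZMod n) ≠ (j : ZMod n) := fun h => hij (by
  rw [← ZMod.val_cast_of_lt hi, ← ZMod.val_cast_of_lt hj, h])

lemma minor_induce_embed {V W : Type*} (G : SimpleGraph V) (H : SimpleGraph W) (s : Set V)
    (f : W → V) (hinj : Function.Injective f) (hs : ∀ w, f w ∈ s)
    (hadj : ∀ ⦃a b⦄, H.Adj a b → G.Adj (f a) (f b)) : IsMinorOf H (G.induce s) := by
  refine minor_induce G H s (fun w => {f w}) (fun w => by simpa using hs w)
    (fun w => ⟨f w, rfl⟩) (fun w => conn_single _ _) ?_ ?_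
  · intro a b hab
    simpa [Set.disjoint_singleton] using fun h => hab (hinj h)
  · intro a b h
    exact ⟨f a, rfl, f b, rfl, hadj h⟩


lemma val_succ' {k : ℕ} [NeZero k] (hk : 3 ≤ k) (i : ZMod k) :
    (i + 1).val = (i.val + 1) % k := by
  rw [ZMod.val_add, ZMod.val_one_eq_one_mod, Nat.mod_eq_of_lt (show 1 < k by omega)]

lemma add_natCast_ne {n : ℕ} [NeZero n] (x : ZMod n) {c : ℕ} (h0 : 0 < c) (hc : c < n) :
    x ≠ x + (c : ℕ) := by
  intro h
  have h2 : ((c : ℕ) : ZMod n) = 0 := (left_eq_add).mp h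
  have := cast_ne hc (Nat.pos_of_ne_zero (NeZero.ne n)) (by omega)
  rw [Nat.cast_zero] at this
  exact this h2

lemma add_cast_ne' {n : ℕ} [NeZero n] (x : ZMod n) {c d : ℕ} (hc : c < n) (hd : d < n)
    (h : c ≠ d) : x + (c : ℕ) ≠ x + (d : ℕ) := fun he => cast_ne hc hd h (add_left_cancel he)

lemma wheel_edges {k : ℕ} (hk : 3 ≤ k) {V : Type*} (G : SimpleGraph V)
    (B : Option (ZMod k) → Set V)
    (hhub : ∀ i : ZMod k, ∃ u ∈ B none, ∃ v ∈ B (some i), G.Adj u v)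
    (hcyc : ∀ i : ZMod k, ∃ u ∈ B (some i), ∃ v ∈ B (some (i + 1)), G.Adj u v) :
    ∀ ⦃w w'⦄, (wheel k).Adj w w' → ∃ u ∈ B w, ∃ v ∈ B w', G.Adj u v := by
  have swap : ∀ {w w' : Option (ZMod k)}, (∃ u ∈ B w, ∃ v ∈ B w', G.Adj u v) →
      ∃ u ∈ B w', ∃ v ∈ B w, G.Adj u v := by
    rintro w w' ⟨u, hu, v, hv, h⟩; exact ⟨v, hv, u, hu, h.symm⟩
  rintro (_ | a) (_ | b) h <;> rw [wheel, fromRel_adj] at h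
  · simp at h
  · exact hhub b
  · exact swap (hhub a)
  · obtain ⟨hne, h | h⟩ := h
    · simp only at h
      subst h
      exact hcyc a
    · simp only at h
      subst h
      exact swap (hcyc b)


section part1
variable (k : ℕ)

lemma dadj_rl (hk : 3 ≤ k) (x : ZMod (k + 1)) (t' : Fin 2) :
    (Dgraph (k + 1)).Adj (.inr t') (.inl x) := by
  rw [Dgraph, fromRel_adj]
  exact ⟨by simp, Or.inr trivial⟩

lemma dadj_cyc (hk : 3 ≤ k) {x y : ZMod (k + 1)} (hne : x ≠ y)
    (h : y = x + 1 ∨ x = y + 1) : (Dgraph (k + 1)).Adj (.inl x) (.inl y) := by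
  rw [Dgraph, fromRel_adj]
  exact ⟨by simp [hne], h⟩

/-! ### Case A : removed vertex is a hub `.inr t` -/

def iD1 (t : Fin 2) (i : ℕ) : ZMod (k + 1) ⊕ Fin 2 :=
  if i = 0 then .inr (t + 1) else .inl ((i - 1 : ℕ) : ZMod (k + 1))

def nD1 : Option (ZMod k) → Set ℕ
  | none => {0}
  | some w => if w.val = 0 then {1, k + 1} else {w.val + 1}

lemma nD1_none : nD1 k none = {0} := rfl

lemma nD1_some (w : ZMod k) :
    nD1 k (some w) = (if w.val = 0 then {1, k + 1} else {w.val + 1} : Set ℕ) := rfl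

lemma mem_nD1_some {x : ℕ} {w : ZMod k} (hx : x ∈ nD1 k (some w)) :
    (w.val = 0 ∧ (x = 1 ∨ x = k + 1)) ∨ (w.val ≠ 0 ∧ x = w.val + 1) := by
  rw [nD1_some] at hx
  by_cases h1 : w.val = 0
  · rw [if_pos h1] at hx; exact Or.inl ⟨h1, by simpa using hx⟩
  · rw [if_neg h1] at hx; exact Or.inr ⟨h1, by simpa using hx⟩

variable {t : Fin 2}

lemma iD1_zero : iD1 k t 0 = .inr (t + 1) := rfl

lemma iD1_succ (j : ℕ) : iD1 k t (j + 1) = .inl ((j : ℕ) : ZMod (k + 1)) := by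
  rw [iD1, if_neg (by omega)]
  norm_num

lemma iD1_inj (hk : 3 ≤ k) (i j : ℕ) (hi : i < k + 2) (hj : j < k + 2)
    (h : iD1 k t i = iD1 k t j) : i = j := by
  haveI : NeZero (k + 1) := ⟨by omega⟩
  match i, j with
  | 0, 0 => rfl
  | 0, j + 1 => rw [iD1_zero, iD1_succ] at h; simp at h
  | i + 1, 0 => rw [iD1_zero, iD1_succ] at h; simp at h
  | i + 1, j + 1 =>
    rw [iD1_succ, iD1_succ] at h
    simp only [Sum.inl.injEq] at h
    by_contra hne
    exact cast_ne (show i < k + 1 from by omega) (show j < k + 1 from by omega) (by omega) h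

lemma part1A (hk : 3 ≤ k) :
    IsMinorOf (wheel k) ((Dgraph (k + 1)).induce ({Sum.inr t}ᶜ)) := by
  haveI : NeZero (k + 1) := ⟨by omega⟩
  haveI : NeZero k := ⟨by omega⟩
  have hf2 : ∀ s : Fin 2, s + 1 ≠ s := by decide
  have hbound : ∀ (w : Option (ZMod k)), ∀ x ∈ nD1 k w, x < k + 2 := by
    rintro (_ | w) x hx
    · rw [nD1_none] at hx; simp at hx; omega
    · have hvl := ZMod.val_lt w
      rcases mem_nD1_some k hx with ⟨_, h | h⟩ | ⟨_, h⟩ <;> omega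
  refine minor_induce _ _ _ (fun w => iD1 k t '' nD1 k w) ?_ ?_ ?_ ?_ ?_
  · -- subset
    rintro w x ⟨i, hi, rfl⟩
    simp only [Set.mem_compl_iff, Set.mem_singleton_iff]
    match i with
    | 0 => rw [iD1_zero]; simp only [Sum.inr.injEq]; exact fun h => hf2 t h
    | i + 1 => rw [iD1_succ]; simp
  · -- nonempty
    rintro (_ | w)
    · exact ⟨_, Set.mem_image_of_mem _ rfl⟩
    · rcases eq_or_ne w.val 0 with h1 | h1
      · exact ⟨_, Set.mem_image_of_mem _ (by rw [nD1_some, if_pos h1]; exact Set.mem_insert _ _)⟩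
      · exact ⟨_, Set.mem_image_of_mem _ (by rw [nD1_some, if_neg h1]; rfl)⟩
  · -- connected
    rintro (_ | w)
    · rw [nD1_none, Set.image_singleton]; exact conn_single _ _
    · rw [nD1_some]
      rcases eq_or_ne w.val 0 with h1 | h1
      · rw [if_pos h1, Set.image_insert_eq, Set.image_singleton,
          show iD1 k t 1 = Sum.inl ((0 : ℕ) : ZMod (k + 1)) from iD1_succ k 0, iD1_succ]
        refine conn_pair _ (dadj_cyc k hk ?_ (Or.inr ?_))
        · exact cast_ne (by omega) (by omega) (by omega)
        · have h := ZMod.natCast_self (k + 1)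
          push_cast at h ⊢
          linear_combination -h
      · rw [if_neg h1, Set.image_singleton]
        exact conn_single _ _
  · -- disjoint
    refine disj_images (iD1 k t) (k + 2) (fun i hi j hj h => iD1_inj k hk i j hi hj h)
      (nD1 k) (fun w x hx => Set.mem_Iio.mpr (hbound w x hx)) ?_
    rintro (_ | w) (_ | w') hne <;> rw [Set.disjoint_left] <;> intro x hx hx'
    · exact absurd rfl hne
    · rw [nD1_none] at hx; simp at hx
      rcases mem_nD1_some k hx' with ⟨_, h | h⟩ | ⟨_, h⟩ <;> omega
    · rw [nD1_none] at hx'; simp at hx'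
      rcases mem_nD1_some k hx with ⟨_, h | h⟩ | ⟨_, h⟩ <;> omega
    · have hvv : w.val ≠ w'.val := fun h => hne (congrArg some (ZMod.val_injective _ h))
      have hvl := ZMod.val_lt w
      have hvl' := ZMod.val_lt w'
      rcases mem_nD1_some k hx with ⟨e1, h | h⟩ | ⟨e1, h⟩ <;>
        rcases mem_nD1_some k hx' with ⟨e2, g | g⟩ | ⟨e2, g⟩ <;> omega
  · -- edges
    refine wheel_edges hk _ _ ?_ ?_
    · intro i
      refine ⟨iD1 k t 0, Set.mem_image_of_mem _ rfl, ?_⟩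
      rcases eq_or_ne i.val 0 with h1 | h1
      · exact ⟨iD1 k t 1, ⟨1, by rw [nD1_some, if_pos h1]; exact Set.mem_insert _ _, rfl⟩,
          by rw [iD1_zero, show iD1 k t 1 = Sum.inl ((0 : ℕ) : ZMod (k + 1)) from iD1_succ k 0]
             exact dadj_rl k hk _ _⟩
      · exact ⟨iD1 k t (i.val + 1), ⟨i.val + 1, by rw [nD1_some, if_neg h1]; rfl, rfl⟩,
          by rw [iD1_zero, iD1_succ]; exact dadj_rl k hk _ _⟩
    · intro i
      have hval := ZMod.val_lt i
      have hsucc := val_succ' hk i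
      by_cases h0 : i.val = 0
      · have h1 : (i + 1).val = 1 := by
          rw [hsucc, h0]; exact Nat.mod_eq_of_lt (by omega)
        refine ⟨iD1 k t 1, ⟨1, ?_, rfl⟩, iD1 k t 2, ⟨2, ?_, rfl⟩, ?_⟩
        · rw [nD1_some, if_pos h0]; exact Set.mem_insert _ _
        · rw [nD1_some, if_neg (show ¬((i + 1).val = 0) from by omega), h1]; rfl
        · rw [show iD1 k t 1 = Sum.inl ((0 : ℕ) : ZMod (k + 1)) from iD1_succ k 0,
            show iD1 k t 2 = Sum.inl ((1 : ℕ) : ZMod (k + 1)) from iD1_succ k 1]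
          refine dadj_cyc k hk (cast_ne (by omega) (by omega) (by omega)) (Or.inl ?_)
          push_cast; ring
      · by_cases hl : i.val = k - 1
        · have h1 : (i + 1).val = 0 := by
            rw [hsucc, show i.val + 1 = k from by omega, Nat.mod_self]
          refine ⟨iD1 k t (i.val + 1), ⟨i.val + 1, by rw [nD1_some, if_neg h0]; rfl, rfl⟩,
            iD1 k t (k + 1), ⟨k + 1, ?_, rfl⟩, ?_⟩
          · rw [nD1_some, if_pos h1]; exact Set.mem_insert_of_mem _ rfl
          · rw [iD1_succ, iD1_succ]
            refine dadj_cyc k hk (cast_ne (by omega) (by omega) (by omega)) (Or.inl ?_)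
            push_cast [Nat.cast_sub (show 1 ≤ k from by omega)]
            rw [hl]
            push_cast [Nat.cast_sub (show 1 ≤ k from by omega)]
            ring
        · have h1 : (i + 1).val = i.val + 1 := by
            rw [hsucc]; exact Nat.mod_eq_of_lt (by omega)
          refine ⟨iD1 k t (i.val + 1), ⟨i.val + 1, by rw [nD1_some, if_neg h0]; rfl, rfl⟩,
            iD1 k t (i.val + 2), ⟨i.val + 2, ?_, rfl⟩, ?_⟩
          · rw [nD1_some, if_neg (show ¬((i + 1).val = 0) from by omega), h1]
            exact Set.mem_singleton_iff.mpr (by omega)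
          · rw [iD1_succ,
              show iD1 k t (i.val + 2) = Sum.inl ((i.val + 1 : ℕ) : ZMod (k + 1)) from
                iD1_succ k (i.val + 1)]
            refine dadj_cyc k hk (cast_ne (by omega) (by omega) (by omega)) (Or.inl ?_)
            push_cast; ring

/-! ### Case B : removed vertex is a cycle vertex `.inl c` -/

def iD2 (c : ZMod (k + 1)) (i : ℕ) : ZMod (k + 1) ⊕ Fin 2 :=
  if i = 0 then .inr 0 else if i = k + 1 then .inr 1 else .inl (c + (i : ℕ))

def nD2 : Option (ZMod k) → Set ℕ
  | none => {0}
  | some w => if w.val = k - 1 then {k, k + 1} else {w.val + 1}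

lemma nD2_none : nD2 k none = {0} := rfl

lemma nD2_some (w : ZMod k) :
    nD2 k (some w) = (if w.val = k - 1 then {k, k + 1} else {w.val + 1} : Set ℕ) := rfl

lemma mem_nD2_some {x : ℕ} {w : ZMod k} (hx : x ∈ nD2 k (some w)) :
    (w.val = k - 1 ∧ (x = k ∨ x = k + 1)) ∨ (w.val ≠ k - 1 ∧ x = w.val + 1) := by
  rw [nD2_some] at hx
  by_cases h1 : w.val = k - 1
  · rw [if_pos h1] at hx; exact Or.inl ⟨h1, by simpa using hx⟩
  · rw [if_neg h1] at hx; exact Or.inr ⟨h1, by simpa using hx⟩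

variable {c : ZMod (k + 1)}

lemma iD2_zero : iD2 k c 0 = .inr 0 := rfl

lemma iD2_last (hk : 3 ≤ k) : iD2 k c (k + 1) = .inr 1 := by
  rw [iD2, if_neg (by omega), if_pos rfl]

lemma iD2_mid {i : ℕ} (h1 : i ≠ 0) (h2 : i ≠ k + 1) :
    iD2 k c i = .inl (c + (i : ℕ)) := by
  rw [iD2, if_neg h1, if_neg h2]

lemma iD2_inj (hk : 3 ≤ k) (i j : ℕ) (hi : i < k + 2) (hj : j < k + 2)
    (h : iD2 k c i = iD2 k c j) : i = j := by
  haveI : NeZero (k + 1) := ⟨by omega⟩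
  by_cases hi0 : i = 0 <;> by_cases hj0 : j = 0
  · omega
  · subst hi0
    by_cases hjl : j = k + 1
    · subst hjl; rw [iD2_zero, iD2_last k hk] at h; simp at h
    · rw [iD2_zero, iD2_mid k hj0 hjl] at h; simp at h
  · subst hj0
    by_cases hil : i = k + 1
    · subst hil; rw [iD2_zero, iD2_last k hk] at h; simp at h
    · rw [iD2_zero, iD2_mid k hi0 hil] at h; simp at h
  · by_cases hil : i = k + 1 <;> by_cases hjl : j = k + 1
    · omega
    · subst hil; rw [iD2_last k hk, iD2_mid k hj0 hjl] at h; simp at h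
    · subst hjl; rw [iD2_last k hk, iD2_mid k hi0 hil] at h; simp at h
    · rw [iD2_mid k hi0 hil, iD2_mid k hj0 hjl] at h
      simp only [Sum.inl.injEq] at h
      by_contra hne
      exact cast_ne (show i < k + 1 from by omega) (show j < k + 1 from by omega) hne
        (add_left_cancel h)

lemma part1B (hk : 3 ≤ k) :
    IsMinorOf (wheel k) ((Dgraph (k + 1)).induce ({Sum.inl c}ᶜ)) := by
  haveI : NeZero (k + 1) := ⟨by omega⟩
  haveI : NeZero k := ⟨by omega⟩
  have hbound : ∀ (w : Option (ZMod k)), ∀ x ∈ nD2 k w, x < k + 2 := by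
    rintro (_ | w) x hx
    · rw [nD2_none] at hx; simp at hx; omega
    · have hvl := ZMod.val_lt w
      rcases mem_nD2_some k hx with ⟨_, h | h⟩ | ⟨_, h⟩ <;> omega
  refine minor_induce _ _ _ (fun w => iD2 k c '' nD2 k w) ?_ ?_ ?_ ?_ ?_
  · -- subset
    rintro w x ⟨i, hi, rfl⟩
    have hik : i < k + 2 := hbound w i hi
    simp only [Set.mem_compl_iff, Set.mem_singleton_iff]
    by_cases hi0 : i = 0
    · subst hi0; rw [iD2_zero]; simp
    · by_cases hil : i = k + 1
      · subst hil; rw [iD2_last k hk]; simp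
      · rw [iD2_mid k hi0 hil]
        simp only [Sum.inl.injEq]
        exact fun h => add_natCast_ne c (c := i) (by omega) (by omega) h.symm
  · -- nonempty
    rintro (_ | w)
    · exact ⟨_, Set.mem_image_of_mem _ rfl⟩
    · rcases eq_or_ne w.val (k - 1) with h1 | h1
      · exact ⟨_, Set.mem_image_of_mem _ (by rw [nD2_some, if_pos h1]; exact Set.mem_insert _ _)⟩
      · exact ⟨_, Set.mem_image_of_mem _ (by rw [nD2_some, if_neg h1]; rfl)⟩
  · -- connected
    rintro (_ | w)
    · rw [nD2_none, Set.image_singleton]; exact conn_single _ _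
    · rw [nD2_some]
      rcases eq_or_ne w.val (k - 1) with h1 | h1
      · rw [if_pos h1, Set.image_insert_eq, Set.image_singleton,
          iD2_mid k (by omega) (by omega), iD2_last k hk]
        exact conn_pair _ ((dadj_rl k hk _ _).symm)
      · rw [if_neg h1, Set.image_singleton]
        exact conn_single _ _
  · -- disjoint
    refine disj_images (iD2 k c) (k + 2) (fun i hi j hj h => iD2_inj k hk i j hi hj h)
      (nD2 k) (fun w x hx => Set.mem_Iio.mpr (hbound w x hx)) ?_
    rintro (_ | w) (_ | w') hne <;> rw [Set.disjoint_left] <;> intro x hx hx'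
    · exact absurd rfl hne
    · rw [nD2_none] at hx; simp at hx
      rcases mem_nD2_some k hx' with ⟨_, h | h⟩ | ⟨_, h⟩ <;> omega
    · rw [nD2_none] at hx'; simp at hx'
      rcases mem_nD2_some k hx with ⟨_, h | h⟩ | ⟨_, h⟩ <;> omega
    · have hvv : w.val ≠ w'.val := fun h => hne (congrArg some (ZMod.val_injective _ h))
      have hvl := ZMod.val_lt w
      have hvl' := ZMod.val_lt w'
      rcases mem_nD2_some k hx with ⟨e1, h | h⟩ | ⟨e1, h⟩ <;>
        rcases mem_nD2_some k hx' with ⟨e2, g | g⟩ | ⟨e2, g⟩ <;> omega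
  · -- edges
    refine wheel_edges hk _ _ ?_ ?_
    · intro i
      have hval := ZMod.val_lt i
      refine ⟨iD2 k c 0, Set.mem_image_of_mem _ rfl, ?_⟩
      rcases eq_or_ne i.val (k - 1) with h1 | h1
      · refine ⟨iD2 k c k, ⟨k, by rw [nD2_some, if_pos h1]; exact Set.mem_insert _ _, rfl⟩, ?_⟩
        rw [iD2_zero, iD2_mid k (by omega) (by omega)]
        exact dadj_rl k hk _ _
      · refine ⟨iD2 k c (i.val + 1), ⟨i.val + 1, by rw [nD2_some, if_neg h1]; rfl, rfl⟩, ?_⟩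
        rw [iD2_zero, iD2_mid k (by omega) (by omega)]
        exact dadj_rl k hk _ _
    · intro i
      have hval := ZMod.val_lt i
      have hsucc := val_succ' hk i
      by_cases hl : i.val = k - 1
      · have h1 : (i + 1).val = 0 := by
          rw [hsucc, show i.val + 1 = k from by omega, Nat.mod_self]
        refine ⟨iD2 k c (k + 1), ⟨k + 1, ?_, rfl⟩, iD2 k c 1, ⟨1, ?_, rfl⟩, ?_⟩
        · rw [nD2_some, if_pos hl]; exact Set.mem_insert_of_mem _ rfl
        · rw [nD2_some, if_neg (show ¬((i + 1).val = k - 1) from by omega), h1]; rfl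
        · rw [iD2_last k hk, iD2_mid k (by omega) (by omega)]
          exact dadj_rl k hk _ _
      · have h1 : (i + 1).val = i.val + 1 := by
          rw [hsucc]; exact Nat.mod_eq_of_lt (by omega)
        refine ⟨iD2 k c (i.val + 1), ⟨i.val + 1, by rw [nD2_some, if_neg hl]; rfl, rfl⟩,
          iD2 k c (i.val + 2), ⟨i.val + 2, ?_, rfl⟩, ?_⟩
        · rcases eq_or_ne (i.val + 1) (k - 1) with h2 | h2
          · rw [nD2_some, if_pos (h1 ▸ h2)]
            exact Set.mem_insert_iff.mpr (Or.inl (by omega))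
          · rw [nD2_some, if_neg (h1 ▸ h2), h1]
            exact Set.mem_singleton_iff.mpr (by omega)
        · rw [iD2_mid k (by omega) (by omega), iD2_mid k (by omega) (by omega)]
          refine dadj_cyc k hk ?_ (Or.inl (by push_cast; ring))
          exact add_cast_ne' c (show i.val + 1 < k + 1 from by omega)
            (show i.val + 2 < k + 1 from by omega) (by omega)

lemma part1 (hk : 3 ≤ k) (v : ZMod (k + 1) ⊕ Fin 2) :
    IsMinorOf (wheel k) ((Dgraph (k + 1)).induce ({v}ᶜ)) := by
  rcases v with c | t
  · exact part1B k hk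
  · exact part1A k hk

end part1
section part2
variable (k : ℕ)

def iO (v : ZMod (k + 1) × ZMod 2) (i : ℕ) : ZMod (k + 1) × ZMod 2 :=
  if i < k then (v.1 + ((i + 1 : ℕ) : ZMod (k + 1)), v.2)
  else (v.1 + ((i - k : ℕ) : ZMod (k + 1)), v.2 + 1)

def nO : Option (ZMod k) → Set ℕ
  | none => {x | 0 ≤ x ∧ x < k}
  | some w => if w.val = 0 then {k, k + 1} else {k + 1 + w.val}

lemma nO_none : nO k none = {x | 0 ≤ x ∧ x < k} := rfl

lemma nO_some (w : ZMod k) :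
    nO k (some w) = (if w.val = 0 then {k, k + 1} else {k + 1 + w.val} : Set ℕ) := rfl

lemma mem_nO_some {x : ℕ} {w : ZMod k} (hx : x ∈ nO k (some w)) :
    (w.val = 0 ∧ (x = k ∨ x = k + 1)) ∨ (w.val ≠ 0 ∧ x = k + 1 + w.val) := by
  rw [nO_some] at hx
  by_cases h1 : w.val = 0
  · rw [if_pos h1] at hx; exact Or.inl ⟨h1, by simpa using hx⟩
  · rw [if_neg h1] at hx; exact Or.inr ⟨h1, by simpa using hx⟩

variable {v : ZMod (k + 1) × ZMod 2}

lemma iO_lo {i : ℕ} (hi : i < k) : iO k v i = (v.1 + ((i + 1 : ℕ) : ZMod (k + 1)), v.2) :=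
  if_pos hi

lemma iO_hi {j : ℕ} : iO k v (k + j) = (v.1 + ((j : ℕ) : ZMod (k + 1)), v.2 + 1) := by
  rw [iO, if_neg (by omega), show k + j - k = j from by omega]

lemma zmod2_ne (b : ZMod 2) : b ≠ b + 1 := by
  revert b; decide

lemma oadj_h (hk : 3 ≤ k) {i : ℕ} (hi : i + 1 < k) :
    (Ograph (k + 1)).Adj (iO k v i) (iO k v (i + 1)) := by
  haveI : NeZero (k + 1) := ⟨by omega⟩
  rw [iO_lo k (by omega), iO_lo k (by omega), Ograph, fromRel_adj]
  constructor
  · intro h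
    exact add_cast_ne' v.1 (show i + 1 < k + 1 from by omega) (show i + 2 < k + 1 from by omega)
      (by omega) (congrArg Prod.fst h)
  · exact Or.inl (Or.inl ⟨rfl, by push_cast; ring⟩)

lemma oadj_c (hk : 3 ≤ k) {j : ℕ} (hj : j + 1 ≤ k) :
    (Ograph (k + 1)).Adj (iO k v (k + j)) (iO k v (k + (j + 1))) := by
  haveI : NeZero (k + 1) := ⟨by omega⟩
  rw [iO_hi, iO_hi, Ograph, fromRel_adj]
  constructor
  · intro h
    exact add_cast_ne' v.1 (show j < k + 1 from by omega) (show j + 1 < k + 1 from by omega)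
      (by omega) (congrArg Prod.fst h)
  · exact Or.inl (Or.inl ⟨rfl, by push_cast; ring⟩)

lemma oadj_wrap (hk : 3 ≤ k) :
    (Ograph (k + 1)).Adj (iO k v (k + k)) (iO k v (k + 0)) := by
  haveI : NeZero (k + 1) := ⟨by omega⟩
  rw [iO_hi, iO_hi, Ograph, fromRel_adj]
  constructor
  · intro h
    exact add_cast_ne' v.1 (show k < k + 1 from by omega) (show 0 < k + 1 from by omega)
      (by omega) (congrArg Prod.fst h)
  · refine Or.inl (Or.inl ⟨rfl, ?_⟩)
    have h := ZMod.natCast_self (k + 1)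
    push_cast at h ⊢
    linear_combination -h

lemma oadj_rung (hk : 3 ≤ k) {i : ℕ} (hi : i < k) :
    (Ograph (k + 1)).Adj (iO k v i) (iO k v (k + (i + 1))) := by
  haveI : NeZero (k + 1) := ⟨by omega⟩
  rw [iO_lo k hi, iO_hi, Ograph, fromRel_adj]
  constructor
  · intro h
    exact zmod2_ne v.2 (congrArg Prod.snd h)
  · exact Or.inl (Or.inr ⟨rfl, rfl⟩)

lemma iO_inj (hk : 3 ≤ k) (i j : ℕ) (hi : i < 2 * k + 1) (hj : j < 2 * k + 1)
    (h : iO k v i = iO k v j) : i = j := by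
  haveI : NeZero (k + 1) := ⟨by omega⟩
  by_cases h1 : i < k <;> by_cases h2 : j < k
  · rw [iO_lo k h1, iO_lo k h2] at h
    by_contra hne
    exact add_cast_ne' v.1 (show i + 1 < k + 1 from by omega) (show j + 1 < k + 1 from by omega)
      (by omega) (congrArg Prod.fst h)
  · rw [iO_lo k h1, show j = k + (j - k) from by omega, iO_hi] at h
    exact absurd (congrArg Prod.snd h) (zmod2_ne v.2)
  · rw [iO_lo k h2, show i = k + (i - k) from by omega, iO_hi] at h
    exact absurd (congrArg Prod.snd h).symm (zmod2_ne v.2)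
  · rw [show i = k + (i - k) from by omega, show j = k + (j - k) from by omega, iO_hi, iO_hi] at h
    by_contra hne
    exact add_cast_ne' v.1 (show i - k < k + 1 from by omega) (show j - k < k + 1 from by omega)
      (by omega) (congrArg Prod.fst h)

lemma part2 (v : ZMod (k + 1) × ZMod 2) (hk : 3 ≤ k) :
    IsMinorOf (wheel k) ((Ograph (k + 1)).induce ({v}ᶜ)) := by
  haveI : NeZero (k + 1) := ⟨by omega⟩
  haveI : NeZero k := ⟨by omega⟩
  have hbound : ∀ (w : Option (ZMod k)), ∀ x ∈ nO k w, x < 2 * k + 1 := by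
    rintro (_ | w) x hx
    · exact lt_of_lt_of_le (nO_none k ▸ hx).2 (by omega)
    · have hvl := ZMod.val_lt w
      rcases mem_nO_some k hx with ⟨_, h | h⟩ | ⟨_, h⟩ <;> omega
  refine minor_induce _ _ _ (fun w => iO k v '' nO k w) ?_ ?_ ?_ ?_ ?_
  · -- subset of {v}ᶜ
    rintro w x ⟨i, hi, rfl⟩
    simp only [Set.mem_compl_iff, Set.mem_singleton_iff]
    intro h
    by_cases h1 : i < k
    · rw [iO_lo k h1] at h
      exact add_natCast_ne v.1 (c := i + 1) (by omega) (by omega) (congrArg Prod.fst h).symm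
    · rw [show i = k + (i - k) from by omega, iO_hi] at h
      exact zmod2_ne v.2 (congrArg Prod.snd h).symm
  · -- nonempty
    rintro (_ | w)
    · exact ⟨iO k v 0, 0, show 0 ≤ 0 ∧ 0 < k from by omega, rfl⟩
    · rcases eq_or_ne w.val 0 with h1 | h1
      · exact ⟨_, Set.mem_image_of_mem _ (by rw [nO_some, if_pos h1]; exact Set.mem_insert _ _)⟩
      · exact ⟨_, Set.mem_image_of_mem _ (by rw [nO_some, if_neg h1]; rfl)⟩
  · -- connected
    rintro (_ | w)
    · exact conn_Ico _ _ 0 k (by omega) (fun i _ h => oadj_h k hk h)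
    · rw [nO_some]
      rcases eq_or_ne w.val 0 with h1 | h1
      · rw [if_pos h1, Set.image_insert_eq, Set.image_singleton]
        exact conn_pair _ (oadj_c k (v := v) hk (j := 0) (by omega))
      · rw [if_neg h1, Set.image_singleton]
        exact conn_single _ _
  · -- disjoint
    refine disj_images (iO k v) (2 * k + 1) (fun i hi j hj h => iO_inj k hk i j hi hj h)
      (nO k) (fun w x hx => Set.mem_Iio.mpr (hbound w x hx)) ?_
    rintro (_ | w) (_ | w') hne <;> rw [Set.disjoint_left] <;> intro x hx hx'
    · exact absurd rfl hne
    · have := (nO_none k ▸ hx).2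
      rcases mem_nO_some k hx' with ⟨_, h | h⟩ | ⟨_, h⟩ <;> omega
    · have := (nO_none k ▸ hx').2
      rcases mem_nO_some k hx with ⟨_, h | h⟩ | ⟨_, h⟩ <;> omega
    · have hvv : w.val ≠ w'.val := fun h => hne (congrArg some (ZMod.val_injective _ h))
      have hvl := ZMod.val_lt w
      have hvl' := ZMod.val_lt w'
      rcases mem_nO_some k hx with ⟨e1, h | h⟩ | ⟨e1, h⟩ <;>
        rcases mem_nO_some k hx' with ⟨e2, g | g⟩ | ⟨e2, g⟩ <;> omega
  · -- edges
    refine wheel_edges hk _ _ ?_ ?_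
    · intro i
      have hval := ZMod.val_lt i
      by_cases h0 : i.val = 0
      · refine ⟨iO k v 0, ⟨0, show 0 ≤ 0 ∧ 0 < k from by omega, rfl⟩,
          iO k v (k + 1), ⟨k + 1, by rw [nO_some, if_pos h0]; exact Set.mem_insert_of_mem _ rfl,
            rfl⟩, ?_⟩
        exact oadj_rung k (v := v) hk (i := 0) (by omega)
      · refine ⟨iO k v i.val, ⟨i.val, show 0 ≤ i.val ∧ i.val < k from by omega, rfl⟩,
          iO k v (k + 1 + i.val), ⟨k + 1 + i.val, by rw [nO_some, if_neg h0]; rfl, rfl⟩, ?_⟩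
        have := oadj_rung k (v := v) hk (i := i.val) (by omega)
        rwa [show k + (i.val + 1) = k + 1 + i.val from by omega] at this
    · intro i
      have hval := ZMod.val_lt i
      have hsucc := val_succ' hk i
      by_cases h0 : i.val = 0
      · have h1 : (i + 1).val = 1 := by
          rw [hsucc, h0]; exact Nat.mod_eq_of_lt (by omega)
        refine ⟨iO k v (k + 1), ⟨k + 1, ?_, rfl⟩, iO k v (k + 2), ⟨k + 2, ?_, rfl⟩,
          oadj_c k (v := v) hk (j := 1) (by omega)⟩
        · rw [nO_some, if_pos h0]
          exact Set.mem_insert_of_mem _ rfl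
        · rw [nO_some, if_neg (show ¬((i + 1).val = 0) from by omega), h1]
          exact Set.mem_singleton_iff.mpr (by omega)
      · by_cases hl : i.val = k - 1
        · have h1 : (i + 1).val = 0 := by
            rw [hsucc, show i.val + 1 = k from by omega, Nat.mod_self]
          refine ⟨iO k v (2 * k), ⟨2 * k, by rw [nO_some, if_neg h0,
              show k + 1 + i.val = 2 * k from by omega]; rfl, rfl⟩,
            iO k v k, ⟨k, by rw [nO_some, if_pos h1]; exact Set.mem_insert _ _, rfl⟩, ?_⟩
          have h2k : 2 * k = k + k := by omega
          rw [h2k]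
          exact oadj_wrap k (v := v) hk
        · have h1 : (i + 1).val = i.val + 1 := by
            rw [hsucc]; exact Nat.mod_eq_of_lt (by omega)
          refine ⟨iO k v (k + 1 + i.val), ⟨k + 1 + i.val, by rw [nO_some, if_neg h0]; rfl, rfl⟩,
            iO k v (k + 2 + i.val), ⟨k + 2 + i.val, by
              rw [nO_some, if_neg (show ¬((i+1).val = 0) from by omega), h1]
              exact Set.mem_singleton_iff.mpr (by omega), rfl⟩, ?_⟩
          have := oadj_c k (v := v) hk (j := i.val + 1) (by omega)
          rwa [show k + (i.val + 1) = k + 1 + i.val from by omega,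
            show k + (i.val + 1 + 1) = k + 2 + i.val from by omega] at this
end part2
section part3
variable (k : ℕ) (hk : 3 ≤ k) (a : ZMod (2 * (k + 1)))

def iM (a : ZMod (2 * (k + 1))) (i : ℕ) : ZMod (2 * (k + 1)) := a + ((i + 1 : ℕ) : ZMod (2 * (k + 1)))

def nM : Option (ZMod k) → Set ℕ
  | none => {x | 0 ≤ x ∧ x < k - 1}
  | some w => if w.val = 0 then {k - 1, k} else if w.val = k - 1 then {2 * k - 1, 2 * k} else {k + w.val}

lemma iM_add (i c : ℕ) : iM k a (i + c) = iM k a i + ((c : ℕ) : ZMod (2 * (k + 1))) := by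
  unfold iM; push_cast; ring

lemma madj (hk : 3 ≤ k) {i j : ℕ} (hij : j = i + 1 ∨ j = i + (k + 1)) :
    (Mgraph (k + 1)).Adj (iM k a i) (iM k a j) := by
  haveI : NeZero (2 * (k + 1)) := ⟨by omega⟩
  rw [Mgraph, fromRel_adj]
  rcases hij with rfl | rfl <;> rw [iM_add] <;> constructor
  · exact add_natCast_ne _ (by omega) (by omega)
  · left; left; push_cast; ring
  · exact add_natCast_ne _ (by omega) (by omega)
  · left; right; push_cast; ring

lemma madj_wrap (hk : 3 ≤ k) :
    (Mgraph (k + 1)).Adj (iM k a (2 * k)) (iM k a (k - 1)) := by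
  haveI : NeZero (2 * (k + 1)) := ⟨by omega⟩
  rw [Mgraph, fromRel_adj]
  have hcast : iM k a (k - 1) = iM k a (2 * k) + ((k + 1 : ℕ) : ZMod (2 * (k + 1))) := by
    unfold iM
    have h := ZMod.natCast_self (2 * (k + 1))
    push_cast [show k - 1 + 1 = k from by omega] at h ⊢
    linear_combination -h
  constructor
  · rw [hcast]; exact add_natCast_ne _ (by omega) (by omega)
  · left; right; exact hcast

lemma iM_inj (i j : ℕ) (hi : i < 2 * k + 1) (hj : j < 2 * k + 1) (h : iM k a i = iM k a j) :
    i = j := by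
  haveI : NeZero (2 * (k + 1)) := ⟨by omega⟩
  unfold iM at h
  have h2 : ((i + 1 : ℕ) : ZMod (2 * (k + 1))) = ((j + 1 : ℕ) : ZMod (2 * (k + 1))) := by
    exact add_left_cancel h
  by_contra hne
  exact cast_ne (show i + 1 < 2 * (k + 1) from by omega) (show j + 1 < 2 * (k + 1) from by omega)
    (by omega) h2

lemma nM_none : nM k none = {x | 0 ≤ x ∧ x < k - 1} := rfl

lemma nM_some (w : ZMod k) : nM k (some w) =
    (if w.val = 0 then {k - 1, k} else if w.val = k - 1 then {2 * k - 1, 2 * k}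
      else {k + w.val} : Set ℕ) := rfl

lemma mem_nM_some {x : ℕ} {w : ZMod k} (hx : x ∈ nM k (some w)) :
    (w.val = 0 ∧ (x = k - 1 ∨ x = k)) ∨
    (w.val ≠ 0 ∧ w.val = k - 1 ∧ (x = 2 * k - 1 ∨ x = 2 * k)) ∨
    (w.val ≠ 0 ∧ w.val ≠ k - 1 ∧ x = k + w.val) := by
  rw [nM_some] at hx
  by_cases h1 : w.val = 0
  · rw [if_pos h1] at hx; exact Or.inl ⟨h1, by simpa using hx⟩
  · rw [if_neg h1] at hx
    by_cases h2 : w.val = k - 1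
    · rw [if_pos h2] at hx; exact Or.inr (Or.inl ⟨h1, h2, by simpa using hx⟩)
    · rw [if_neg h2] at hx; exact Or.inr (Or.inr ⟨h1, h2, by simpa using hx⟩)

lemma part3 (v : ZMod (2 * (k + 1))) (hk : 3 ≤ k) :
    IsMinorOf (wheel k) ((Mgraph (k + 1)).induce ({v}ᶜ)) := by
  haveI : NeZero (2 * (k + 1)) := ⟨by omega⟩
  haveI : NeZero k := ⟨by omega⟩
  have hbound : ∀ (w : Option (ZMod k)), ∀ x ∈ nM k w, x < 2 * k + 1 := by
    rintro (_ | w) x hx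
    · exact lt_of_lt_of_le (nM_none k ▸ hx).2 (by omega)
    · have hvl := ZMod.val_lt w
      rcases mem_nM_some k hx with ⟨_, h | h⟩ | ⟨_, _, h | h⟩ | ⟨_, _, h⟩ <;> omega
  refine minor_induce _ _ _ (fun w => iM k v '' nM k w) ?_ ?_ ?_ ?_ ?_
  · -- subset of {v}ᶜ
    rintro w x ⟨i, hi, rfl⟩
    have hin : i < 2 * k + 1 := hbound w i hi
    simp only [Set.mem_compl_iff, Set.mem_singleton_iff]
    intro h
    exact add_natCast_ne v (c := i + 1) (by omega) (by omega) h.symm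
  · -- nonempty
    rintro (_ | w)
    · exact ⟨iM k v 0, 0, show 0 ≤ 0 ∧ 0 < k - 1 from by omega, rfl⟩
    · rcases eq_or_ne w.val 0 with h1 | h1
      · exact ⟨_, Set.mem_image_of_mem _ (by rw [nM_some, if_pos h1]; exact Set.mem_insert _ _)⟩
      · rcases eq_or_ne w.val (k - 1) with h2 | h2
        · exact ⟨_, Set.mem_image_of_mem _
            (by rw [nM_some, if_neg h1, if_pos h2]; exact Set.mem_insert _ _)⟩
        · exact ⟨_, Set.mem_image_of_mem _ (by rw [nM_some, if_neg h1, if_neg h2]; rfl)⟩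
  · -- connected
    rintro (_ | w)
    · exact conn_Ico _ _ 0 (k - 1) (by omega) (fun i _ _ => madj k v hk (Or.inl rfl))
    · rw [nM_some]
      rcases eq_or_ne w.val 0 with h1 | h1
      · rw [if_pos h1, Set.image_insert_eq, Set.image_singleton]
        exact conn_pair _ (madj k v hk (Or.inl (by omega)))
      · rcases eq_or_ne w.val (k - 1) with h2 | h2
        · rw [if_neg h1, if_pos h2, Set.image_insert_eq, Set.image_singleton]
          exact conn_pair _ (madj k v hk (Or.inl (by omega)))
        · rw [if_neg h1, if_neg h2, Set.image_singleton]
          exact conn_single _ _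
  · -- disjoint
    refine disj_images (iM k v) (2 * k + 1) (fun i hi j hj h => iM_inj k v i j hi hj h)
      (nM k) (fun w x hx => Set.mem_Iio.mpr (hbound w x hx)) ?_
    rintro (_ | w) (_ | w') hne <;> rw [Set.disjoint_left] <;> intro x hx hx'
    · exact absurd rfl hne
    · have := (nM_none k ▸ hx).2
      have hvl := ZMod.val_lt w'
      rcases mem_nM_some k hx' with ⟨_, h | h⟩ | ⟨_, _, h | h⟩ | ⟨_, _, h⟩ <;> omega
    · have := (nM_none k ▸ hx').2
      have hvl := ZMod.val_lt w
      rcases mem_nM_some k hx with ⟨_, h | h⟩ | ⟨_, _, h | h⟩ | ⟨_, _, h⟩ <;> omega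
    · have hvv : w.val ≠ w'.val := fun h => hne (congrArg some (ZMod.val_injective _ h))
      have hvl := ZMod.val_lt w
      have hvl' := ZMod.val_lt w'
      rcases mem_nM_some k hx with ⟨e1, h | h⟩ | ⟨e1, e1', h | h⟩ | ⟨e1, e1', h⟩ <;>
        rcases mem_nM_some k hx' with ⟨e2, g | g⟩ | ⟨e2, e2', g | g⟩ | ⟨e2, e2', g⟩ <;> omega
  · -- edges
    refine wheel_edges hk _ _ ?_ ?_
    · intro i
      have hval := ZMod.val_lt i
      by_cases h0 : i.val = 0
      · exact ⟨iM k v (k - 2), ⟨k - 2, show 0 ≤ k - 2 ∧ k - 2 < k - 1 from by omega, rfl⟩,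
          iM k v (k - 1), ⟨k - 1, by rw [nM_some, if_pos h0]; exact Set.mem_insert _ _, rfl⟩,
          madj k v hk (Or.inl (by omega))⟩
      · by_cases h1 : i.val = k - 1
        · exact ⟨iM k v (k - 2), ⟨k - 2, show 0 ≤ k - 2 ∧ k - 2 < k - 1 from by omega, rfl⟩,
            iM k v (2 * k - 1),
            ⟨2 * k - 1, by rw [nM_some, if_neg h0, if_pos h1]; exact Set.mem_insert _ _, rfl⟩,
            madj k v hk (Or.inr (by omega))⟩
        · exact ⟨iM k v (i.val - 1), ⟨i.val - 1, show 0 ≤ i.val - 1 ∧ i.val - 1 < k - 1 from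
              by omega, rfl⟩,
            iM k v (k + i.val), ⟨k + i.val, by rw [nM_some, if_neg h0, if_neg h1]; rfl, rfl⟩,
            madj k v hk (Or.inr (by omega))⟩
    · intro i
      have hval := ZMod.val_lt i
      have hsucc := val_succ' hk i
      by_cases h0 : i.val = 0
      · have h1 : (i + 1).val = 1 := by
          rw [hsucc, h0]; exact Nat.mod_eq_of_lt (by omega)
        exact ⟨iM k v k, ⟨k, by rw [nM_some, if_pos h0]; exact Set.mem_insert_of_mem _ rfl, rfl⟩,
          iM k v (k + 1), ⟨k + 1, by
            rw [nM_some, if_neg (show ¬((i+1).val = 0) from by omega),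
              if_neg (show ¬((i+1).val = k - 1) from by omega), h1]
            exact rfl, rfl⟩,
          madj k v hk (Or.inl rfl)⟩
      · by_cases hl : i.val = k - 1
        · have h1 : (i + 1).val = 0 := by
            rw [hsucc, show i.val + 1 = k from by omega, Nat.mod_self]
          exact ⟨iM k v (2 * k),
            ⟨2 * k, by rw [nM_some, if_neg h0, if_pos hl]; exact Set.mem_insert_of_mem _ rfl, rfl⟩,
            iM k v (k - 1), ⟨k - 1, by rw [nM_some, if_pos h1]; exact Set.mem_insert _ _, rfl⟩,
            madj_wrap k v hk⟩
        · by_cases hl2 : i.val = k - 2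
          · have h1 : (i + 1).val = k - 1 := by
              rw [hsucc, Nat.mod_eq_of_lt (by omega)]; omega
            refine ⟨iM k v (k + i.val), ⟨k + i.val, by rw [nM_some, if_neg h0, if_neg hl]; rfl, rfl⟩,
              iM k v (2 * k - 1),
              ⟨2 * k - 1, by
                rw [nM_some, if_neg (show ¬((i+1).val = 0) from by omega), if_pos h1]
                exact Set.mem_insert _ _, rfl⟩, ?_⟩
            have : 2 * k - 1 = (k + i.val) + 1 := by omega
            rw [this]
            exact madj k v hk (Or.inl rfl)
          · have h1 : (i + 1).val = i.val + 1 := by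
              rw [hsucc]; exact Nat.mod_eq_of_lt (by omega)
            exact ⟨iM k v (k + i.val), ⟨k + i.val, by rw [nM_some, if_neg h0, if_neg hl]; rfl, rfl⟩,
              iM k v (k + i.val + 1), ⟨k + i.val + 1, by
                rw [nM_some, if_neg (show ¬((i+1).val = 0) from by omega),
                  if_neg (show ¬((i+1).val = k - 1) from by omega), h1]
                rfl, rfl⟩,
              madj k v hk (Or.inl rfl)⟩
end part3
lemma part4 (k : ℕ) (hk : 3 ≤ k) (v : Fin 4 ⊕ Fin (k+1)) :
    IsMinorOf (completeBipartiteGraph (Fin 3) (Fin k))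
      ((completeBipartiteGraph (Fin 4) (Fin (k + 1))).induce ({v}ᶜ)) := by
  obtain j | j := v
  · refine minor_induce_embed _ _ _ (Sum.map j.succAbove Fin.castSucc) ?_ ?_ ?_
    · exact Sum.map_injective.mpr ⟨Fin.succAbove_right_injective, Fin.castSucc_injective _⟩
    · rintro (a | a) <;> simp [Fin.succAbove_ne]
    · rintro (a | a) (b | b) h <;> simp_all [completeBipartiteGraph]
  · refine minor_induce_embed _ _ _ (Sum.map Fin.castSucc j.succAbove) ?_ ?_ ?_
    · exact Sum.map_injective.mpr ⟨Fin.castSucc_injective _, Fin.succAbove_right_injective⟩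
    · rintro (a | a) <;> simp [Fin.succAbove_ne]
    · rintro (a | a) (b | b) h <;> simp_all [completeBipartiteGraph]


/-- For every vertex `v`, `W_k` is a minor of `D_{k+1} − v`, of `O_{k+1} − v` and of
`M_{k+1} − v`, and `K_{3,k}` is a minor of `K_{4,k+1} − v`. -/
theorem stmt_12 (k : ℕ) (hk : 3 ≤ k) :
    (∀ v, IsMinorOf (wheel k) ((Dgraph (k + 1)).induce ({v}ᶜ))) ∧
    (∀ v, IsMinorOf (wheel k) ((Ograph (k + 1)).induce ({v}ᶜ))) ∧
    (∀ v, IsMinorOf (wheel k) ((Mgraph (k + 1)).induce ({v}ᶜ))) ∧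
    (∀ v, IsMinorOf (completeBipartiteGraph (Fin 3) (Fin k))
      ((completeBipartiteGraph (Fin 4) (Fin (k + 1))).induce ({v}ᶜ))) := by
  exact ⟨fun v => part1 k hk v, fun v => part2 k v hk, fun v => part3 k v hk,
    fun v => part4 k hk v⟩
end
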